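/- arXiv:1312.6297 — 10 statements merged into one kernel-verified Lean document; each statement's English description precedes it below -/
import Mathlib

section
/- Let I ⊆ J ⊆ ℝ be intervals containing 0 as an interior point. If g : J → ℝ is additive on J (i.e., g(x+y) = g(x) + g(y) whenever x, y, x+y ∈ J) and Lebesgue measurable on I, then there exists β ∈ ℝ such that g(x) = βx for all x ∈ J. -/
open MeasureTheory Set Metric Pointwise Topology Filter

theorem additive_locally_measurable_is_linear
    (I J : Set ℝ) (hIJ : I ⊆ J) (hIconv : Convex ℝ I) (hJconv : Convex ℝ J)
    (h0I : (0 : ℝ) ∈ interior I)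
    (g : ℝ → ℝ)
    (hmeas : Measurable (I.restrict g))
    (hadd : ∀ x ∈ J, ∀ y ∈ J, x + y ∈ J → g (x + y) = g x + g y) :
    ∃ β : ℝ, ∀ x ∈ J, g x = β * x := by
  have h0I' : (0 : ℝ) ∈ I := interior_subset h0I
  have h0J : (0 : ℝ) ∈ J := hIJ h0I'
  have hg0 : g 0 = 0 := by
    have h := hadd 0 h0J 0 h0J (by simpa using h0J)
    simp only [add_zero] at h; linarith
  obtain ⟨δ, hδ, hball⟩ : ∃ δ > 0, ball (0 : ℝ) δ ⊆ I := by
    obtain ⟨δ, hδ, h⟩ := Metric.isOpen_iff.1 isOpen_interior 0 h0I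
    exact ⟨δ, hδ, h.trans interior_subset⟩
  have hballJ : ball (0 : ℝ) δ ⊆ J := hball.trans hIJ
  -- key division lemma: g x = n * g (x / n) for x ∈ J
  have hdiv : ∀ n : ℕ, 0 < n → ∀ x ∈ J, g x = n * g (x / n) := by
    intro n hn x hx
    have hn' : (0 : ℝ) < n := by exact_mod_cast hn
    have hmem : ∀ k : ℕ, k ≤ n → ((k : ℝ) * (x / n)) ∈ J := by
      intro k hk
      have h1 : ((k : ℝ) / n) • x ∈ J :=
        hJconv.smul_mem_of_zero_mem h0J hx
          ⟨by positivity, by rw [div_le_one hn']; exact_mod_cast hk⟩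
      have h2 : (k : ℝ) * (x / n) = ((k : ℝ) / n) • x := by
        rw [smul_eq_mul]; ring
      rwa [h2]
    have key : ∀ k : ℕ, k ≤ n → g ((k : ℝ) * (x / n)) = k * g (x / n) := by
      intro k hk
      induction k with
      | zero => simpa using hg0
      | succ k ih =>
        have hk' : k ≤ n := Nat.le_of_succ_le hk
        have h1 := hmem k hk'
        have h2 : x / n ∈ J := by
          have := hmem 1 hn; simpa using this
        have h3 : (k : ℝ) * (x / n) + x / n ∈ J := by
          have := hmem (k + 1) hk
          have he : ((k + 1 : ℕ) : ℝ) * (x / n) = (k : ℝ) * (x / n) + x / n := by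
            push_cast; ring
          rwa [he] at this
        have := hadd _ h1 _ h2 h3
        have he : ((k + 1 : ℕ) : ℝ) * (x / n) = (k : ℝ) * (x / n) + x / n := by
          push_cast; ring
        rw [he, this, ih hk']
        push_cast; ring
    have := key n le_rfl
    rwa [mul_div_cancel₀ x hn'.ne'] at this
  -- the global extension G
  set G : ℝ → ℝ := fun x => ((⌈|x| / δ⌉₊ + 1 : ℕ) : ℝ) * g (x / (⌈|x| / δ⌉₊ + 1 : ℕ)) with hGdef
  have hmemball : ∀ (x : ℝ) (k : ℕ), 0 < k → |x| < k * δ → x / k ∈ ball (0 : ℝ) δ := by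
    intro x k hk hxk
    have hk' : (0 : ℝ) < k := by exact_mod_cast hk
    simp only [mem_ball, dist_zero_right, Real.norm_eq_abs, abs_div, abs_of_pos hk']
    rw [div_lt_iff₀ hk']
    linarith [hxk]
  have hceil : ∀ x : ℝ, |x| < ((⌈|x| / δ⌉₊ + 1 : ℕ) : ℝ) * δ := by
    intro x
    have h1 : |x| / δ ≤ (⌈|x| / δ⌉₊ : ℝ) := Nat.le_ceil _
    have h2 : |x| ≤ (⌈|x| / δ⌉₊ : ℝ) * δ := by
      rw [← div_le_iff₀ hδ] at *; linarith
    push_cast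
    nlinarith
  -- G computed with any large enough k
  have hGk : ∀ (x : ℝ) (k : ℕ), 0 < k → |x| < k * δ → G x = k * g (x / k) := by
    intro x k hk hxk
    set m : ℕ := ⌈|x| / δ⌉₊ + 1 with hm
    have hm0 : 0 < m := Nat.succ_pos _
    have hm' : (0 : ℝ) < m := by exact_mod_cast hm0
    have hk' : (0 : ℝ) < k := by exact_mod_cast hk
    have hxm : x / m ∈ J := hballJ (hmemball x m hm0 (hceil x))
    have hxk' : x / k ∈ J := hballJ (hmemball x k hk hxk)
    have e1 : g (x / m) = k * g (x / m / k) := hdiv k hk _ hxm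
    have e2 : g (x / k) = m * g (x / k / m) := hdiv m hm0 _ hxk'
    have e3 : x / m / k = x / k / m := by ring
    rw [hGdef]
    simp only []
    rw [← hm, e1, e2, e3]; ring
  -- G agrees with g on J
  have hGJ : ∀ x ∈ J, G x = g x := fun x hx =>
    (hdiv _ (Nat.succ_pos _) x hx).symm
  -- G is additive
  have hGadd : ∀ x y : ℝ, G (x + y) = G x + G y := by
    intro x y
    set k : ℕ := ⌈(|x| + |y|) / δ⌉₊ + 1 with hk
    have hk0 : 0 < k := Nat.succ_pos _
    have hk' : (0 : ℝ) < k := by exact_mod_cast hk0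
    have hbig : |x| + |y| < k * δ := by
      have h1 : (|x| + |y|) / δ ≤ (⌈(|x| + |y|) / δ⌉₊ : ℝ) := Nat.le_ceil _
      rw [div_le_iff₀ hδ] at h1
      push_cast [hk]
      nlinarith
    have hx1 : |x| < k * δ := by
      have := abs_nonneg y; linarith
    have hy1 : |y| < k * δ := by
      have := abs_nonneg x; linarith
    have hxy1 : |x + y| < k * δ := lt_of_le_of_lt (abs_add_le x y) hbig
    rw [hGk x k hk0 hx1, hGk y k hk0 hy1, hGk (x + y) k hk0 hxy1]
    have hxJ : x / k ∈ J := hballJ (hmemball x k hk0 hx1)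
    have hyJ : y / k ∈ J := hballJ (hmemball y k hk0 hy1)
    have hxyJ : x / k + y / k ∈ J := by
      have : x / k + y / k = (x + y) / k := by ring
      rw [this]; exact hballJ (hmemball (x + y) k hk0 hxy1)
    have := hadd _ hxJ _ hyJ hxyJ
    have he : (x + y) / k = x / k + y / k := by ring
    rw [he, this]; ring
  -- measurability: the extension of g by 0 outside I
  have hIms : MeasurableSet I := hIconv.ordConnected.measurableSet
  set f : ℝ → ℝ := Function.extend (Subtype.val : I → ℝ) (I.restrict g) (fun _ => 0) with hfdef
  have hf : Measurable f :=
    (MeasurableEmbedding.subtype_coe hIms).measurable_extend hmeas measurable_const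
  have hfg : ∀ x ∈ I, f x = g x := by
    intro x hx
    have : f ((⟨x, hx⟩ : I) : ℝ) = I.restrict g ⟨x, hx⟩ :=
      Subtype.val_injective.extend_apply _ _ _
    exact this
  -- a set of positive measure where g is bounded
  obtain ⟨n, hn⟩ : ∃ n : ℕ, 0 < volume (ball (0 : ℝ) (δ / 2) ∩ f ⁻¹' (Icc (-(n : ℝ)) n)) := by
    by_contra hcon
    push_neg at hcon
    simp only [nonpos_iff_eq_zero] at hcon
    have hcover : ball (0 : ℝ) (δ / 2) ⊆ ⋃ n : ℕ, ball (0 : ℝ) (δ / 2) ∩ f ⁻¹' (Icc (-(n : ℝ)) n) := by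
      intro x hx
      refine mem_iUnion.2 ⟨⌈|f x|⌉₊, hx, ?_⟩
      have h1 : |f x| ≤ (⌈|f x|⌉₊ : ℝ) := Nat.le_ceil _
      exact ⟨(abs_le.1 h1).1, (abs_le.1 h1).2⟩
    have h0 : volume (ball (0 : ℝ) (δ / 2)) = 0 := by
      refine le_antisymm ?_ (by simp)
      calc volume (ball (0 : ℝ) (δ / 2)) ≤ volume (⋃ n : ℕ, ball (0 : ℝ) (δ / 2) ∩ f ⁻¹' (Icc (-(n : ℝ)) n)) := measure_mono hcover
        _ ≤ ∑' n : ℕ, volume (ball (0 : ℝ) (δ / 2) ∩ f ⁻¹' (Icc (-(n : ℝ)) n)) := measure_iUnion_le _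
        _ = 0 := by simp [hcon]
    exact (measure_ball_pos volume 0 (by linarith)).ne' h0
  set E : Set ℝ := ball (0 : ℝ) (δ / 2) ∩ f ⁻¹' (Icc (-(n : ℝ)) n) with hEdef
  have hEms : MeasurableSet E := measurableSet_ball.inter (hf measurableSet_Icc)
  have hEbound : ∀ x ∈ E, x ∈ I ∧ |g x| ≤ n := by
    intro x hx
    have hxI : x ∈ I := hball (by
      have := hx.1
      simp only [mem_ball, dist_zero_right, Real.norm_eq_abs] at this ⊢
      linarith)
    refine ⟨hxI, ?_⟩
    have := hx.2
    rw [mem_preimage, hfg x hxI] at this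
    exact abs_le.2 ⟨this.1, this.2⟩
  -- Steinhaus
  have hsub : E - E ∈ 𝓝 (0 : ℝ) :=
    MeasureTheory.Measure.sub_mem_nhds_zero_of_addHaar_pos volume E hEms hn
  obtain ⟨ε₀, hε₀, hballE⟩ := Metric.mem_nhds_iff.1 hsub
  set ε : ℝ := min ε₀ (δ / 2) with hεdef
  have hε : 0 < ε := lt_min hε₀ (by linarith)
  have hεδ : ε ≤ δ / 2 := min_le_right _ _
  have hbound : ∀ z : ℝ, |z| < ε → |g z| ≤ 2 * n := by
    intro z hz
    have hzE : z ∈ E - E := hballE (by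
      simp only [mem_ball, dist_zero_right, Real.norm_eq_abs]
      exact hz.trans_le (min_le_left _ _))
    obtain ⟨a, ha, b, hb, hab⟩ := mem_sub.1 hzE
    obtain ⟨haI, haB⟩ := hEbound a ha
    obtain ⟨hbI, hbB⟩ := hEbound b hb
    have hzJ : z ∈ J := hballJ (by
      simp only [mem_ball, dist_zero_right, Real.norm_eq_abs]
      linarith)
    have hbJ : b ∈ J := hIJ hbI
    have haJ : z + b ∈ J := by rw [← hab]; simpa using hIJ haI
    have := hadd z hzJ b hbJ haJ
    have hza : z + b = a := by rw [← hab]; ring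
    rw [hza] at this
    have : g z = g a - g b := by linarith
    rw [this]
    calc |g a - g b| ≤ |g a| + |g b| := abs_sub _ _
      _ ≤ 2 * n := by linarith
  -- halving estimate
  have hsmall : ∀ (k : ℕ) (z : ℝ), |z| < ε / 2 ^ k → |g z| ≤ 2 * n / 2 ^ k := by
    intro k z hz
    have h2k : (0 : ℝ) < 2 ^ k := by positivity
    have hz' : |(2 : ℝ) ^ k * z| < ε := by
      rw [abs_mul, abs_pow, abs_two]
      calc (2 : ℝ) ^ k * |z| < 2 ^ k * (ε / 2 ^ k) := by
            exact mul_lt_mul_of_pos_left hz h2k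
        _ = ε := by field_simp
    have hzJ : (2 : ℝ) ^ k * z ∈ J := hballJ (by
      simp only [mem_ball, dist_zero_right, Real.norm_eq_abs]
      linarith)
    have := hdiv (2 ^ k) (by positivity) _ hzJ
    push_cast at this
    have he2 : (2 : ℝ) ^ k * z / 2 ^ k = z := by field_simp
    rw [he2] at this
    have hb := hbound _ hz'
    rw [this, abs_mul, abs_pow, abs_two] at hb
    rw [le_div_iff₀ h2k]
    linarith
  -- continuity of G at 0
  have hG0 : G 0 = 0 := by rw [hGJ 0 h0J, hg0]
  have hGcont0 : ContinuousAt G 0 := by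
    rw [ContinuousAt, hG0, Metric.tendsto_nhds]
    intro η hη
    obtain ⟨k, hk⟩ : ∃ k : ℕ, 2 * (n : ℝ) / 2 ^ k < η := by
      obtain ⟨k, hk⟩ := pow_unbounded_of_one_lt (2 * (n : ℝ) / η) (by norm_num : (1:ℝ) < 2)
      refine ⟨k, ?_⟩
      rw [div_lt_iff₀ (by positivity : (0:ℝ) < 2 ^ k)]
      rw [div_lt_iff₀ hη] at hk
      nlinarith
    have hpos : 0 < min (ε / 2 ^ k) δ := lt_min (by positivity) hδ
    filter_upwards [Metric.ball_mem_nhds (0 : ℝ) hpos] with x hx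
    simp only [mem_ball, dist_zero_right, Real.norm_eq_abs] at hx
    have hxδ : |x| < δ := hx.trans_le (min_le_right _ _)
    have hxJ : x ∈ J := hballJ (by
      simpa [mem_ball, dist_zero_right, Real.norm_eq_abs] using hxδ)
    rw [Real.dist_eq, sub_zero, hGJ x hxJ]
    calc |g x| ≤ 2 * n / 2 ^ k := hsmall k x (hx.trans_le (min_le_left _ _))
      _ < η := hk
  -- conclude
  set F : ℝ →+ ℝ := AddMonoidHom.mk' G hGadd with hFdef
  have hGcont : Continuous G := continuous_of_continuousAt_zero F hGcont0
  refine ⟨G 1, fun x hx => ?_⟩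
  have := map_real_smul F hGcont x 1
  simp only [smul_eq_mul, mul_one] at this
  have hFx : F x = G x := rfl
  rw [← hGJ x hx]
  rw [show G x = F x from rfl, this]
  show x * F 1 = G 1 * x
  rw [show F 1 = G 1 from rfl]; ring
end

section
/- Let I ⊆ J ⊆ ℝ be intervals containing 0 as an interior point. If g : J → ℝ is additive on J and continuous on I, then g is linear on J: g(x) = βx for some β ∈ ℝ. -/
theorem additive_locally_continuous_is_linear
    (I J : Set ℝ) (hIJ : I ⊆ J) (hIconv : Convex ℝ I) (hJconv : Convex ℝ J)
    (h0I : (0 : ℝ) ∈ interior I)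
    (g : ℝ → ℝ)
    (hcont : ContinuousOn g I)
    (hadd : ∀ x ∈ J, ∀ y ∈ J, x + y ∈ J → g (x + y) = g x + g y) :
    ∃ β : ℝ, ∀ x ∈ J, g x = β * x := by
  -- ball inside I
  obtain ⟨ε, hε, hball⟩ : ∃ ε > 0, Metric.ball (0:ℝ) ε ⊆ I := by
    rw [mem_interior_iff_mem_nhds, Metric.mem_nhds_iff] at h0I
    exact h0I
  have h0J : (0:ℝ) ∈ J := hIJ (interior_subset h0I)
  have hg0 : g 0 = 0 := by
    have := hadd 0 h0J 0 h0J (by simpa using h0J)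
    simp at this; linarith
  have hsm : ∀ x ∈ J, ∀ t ∈ Set.Icc (0:ℝ) 1, t * x ∈ J := by
    intro x hx t ht
    simpa using hJconv.smul_mem_of_zero_mem h0J hx ht
  -- natural multiples
  have hnat : ∀ n : ℕ, ∀ y ∈ J, (n:ℝ) * y ∈ J → g ((n:ℝ) * y) = n * g y := by
    intro n
    induction n with
    | zero => simp [hg0]
    | succ n ih =>
      intro y hy hny
      have hpos : (0:ℝ) < n + 1 := by positivity
      have hmem : (n:ℝ) * y ∈ J := by
        have h01 : (n:ℝ)/(n+1) ∈ Set.Icc (0:ℝ) 1 := by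
          constructor
          · positivity
          · rw [div_le_one hpos]; linarith
        have := hsm _ hny _ h01
        have heq : (n:ℝ)/(n+1) * (((n:ℕ)+1:ℝ) * y) = (n:ℝ) * y := by
          field_simp
        rw [show ((n:ℕ)+(1:ℕ):ℕ) = ((n:ℕ)+1:ℕ) from rfl] at this
        push_cast at this ⊢
        rwa [heq] at this
      have hsum : ((n:ℕ):ℝ) * y + y = ((n+1:ℕ):ℝ) * y := by push_cast; ring
      have := hadd ((n:ℝ)*y) hmem y hy (by rw [hsum]; exact hny)
      rw [hsum] at this
      rw [this, ih y hy hmem]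
      push_cast; ring
  -- symmetric: g(-x) = -g x for x, -x ∈ J
  have hneg : ∀ x ∈ J, -x ∈ J → g (-x) = - g x := by
    intro x hx hnx
    have := hadd x hx (-x) hnx (by simpa using h0J)
    simp [hg0] at this; linarith
  -- integer multiples inside the ball
  have hint : ∀ k : ℤ, ∀ y ∈ Metric.ball (0:ℝ) ε, (k:ℝ) * y ∈ Metric.ball (0:ℝ) ε →
      g ((k:ℝ) * y) = k * g y := by
    intro k y hy hky
    have hyJ : y ∈ J := hIJ (hball hy)
    rcases le_or_gt 0 k with hk | hk
    · lift k to ℕ using hk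
      exact_mod_cast hnat k y hyJ (hIJ (hball (by exact_mod_cast hky)))
    · have hky' : ((-k : ℤ):ℝ) * y ∈ Metric.ball (0:ℝ) ε := by
        simp only [Metric.mem_ball, Real.dist_eq, sub_zero] at hky ⊢
        push_cast
        rw [abs_mul] at hky ⊢
        simpa [abs_neg] using hky
      have h1 : g (((-k:ℤ):ℝ) * y) = (-k:ℤ) * g y := by
        lift (-k) to ℕ using (by omega : 0 ≤ -k) with m hm
        exact_mod_cast hnat m y hyJ (hIJ (hball (by exact_mod_cast hky')))
      have heq : ((-k:ℤ):ℝ) * y = -((k:ℝ)*y) := by push_cast; ring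
      rw [heq] at h1
      have hmem : ((k:ℝ)*y) ∈ J := hIJ (hball hky)
      have hmem' : -((k:ℝ)*y) ∈ J := hIJ (hball (by rw [← heq]; exact hky'))
      have := hneg _ hmem hmem'
      rw [this] at h1
      push_cast at h1
      linarith
  set c : ℝ := ε/2 with hc
  have hcpos : 0 < c := by positivity
  set β : ℝ := g c / c with hβ
  have hcball : c ∈ Metric.ball (0:ℝ) ε := by
    simp only [Metric.mem_ball, Real.dist_eq, sub_zero]
    rw [abs_of_pos hcpos, hc]; linarith
  -- rational multiples of c
  have hQ : ∀ (k : ℤ) (n : ℕ), n ≠ 0 → ((k:ℝ)/n) * c ∈ Metric.ball (0:ℝ) ε →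
      g (((k:ℝ)/n) * c) = β * (((k:ℝ)/n) * c) := by
    intro k n hn hmem
    have hnpos : (0:ℝ) < n := by positivity
    set y : ℝ := c / n with hy
    have hyball : y ∈ Metric.ball (0:ℝ) ε := by
      simp only [Metric.mem_ball, Real.dist_eq, sub_zero, hy]
      rw [abs_of_pos (by positivity)]
      calc c / n ≤ c / 1 := by
            apply div_le_div_of_nonneg_left (le_of_lt hcpos) one_pos
            exact_mod_cast Nat.one_le_iff_ne_zero.mpr hn
        _ = c := div_one c
        _ < ε := by rw [hc]; linarith
    have hn' : (n:ℝ) ≠ 0 := hnpos.ne'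
    have hcy : (n:ℝ) * y = c := by rw [hy]; field_simp
    have hgy : g y = g c / n := by
      have := hnat n y (hIJ (hball hyball)) (by rw [hcy]; exact hIJ (hball hcball))
      rw [hcy] at this
      field_simp [this]
      rw [this]; ring
    have hky : (k:ℝ) * y = ((k:ℝ)/n) * c := by rw [hy]; field_simp
    have := hint k y hyball (by rw [hky]; exact hmem)
    rw [hky] at this
    rw [this, hgy, hβ]
    field_simp
  -- linear on the ball, via continuity
  have hball_lin : ∀ x ∈ Metric.ball (0:ℝ) ε, g x = β * x := by
    intro x hx
    have hxI : x ∈ I := hball hx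
    have habs : |x| < ε := by simpa [Metric.mem_ball, Real.dist_eq] using hx
    -- sequence u n
    set u : ℕ → ℝ := fun n => ((⌊(n+1) * x / c⌋ : ℝ) / (n+1)) * c with hu
    have hub : ∀ n : ℕ, |u n - x| ≤ c / (n+1) := by
      intro n
      have hn1 : (0:ℝ) < (n:ℝ)+1 := by positivity
      have h1 : (⌊((n:ℝ)+1) * x / c⌋ : ℝ) ≤ ((n:ℝ)+1) * x / c := Int.floor_le _
      have h2 : ((n:ℝ)+1) * x / c < ⌊((n:ℝ)+1) * x / c⌋ + 1 := Int.lt_floor_add_one _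
      have hA : (⌊((n:ℝ)+1) * x / c⌋ : ℝ) * c ≤ ((n:ℝ)+1) * x := (le_div_iff₀ hcpos).mp h1
      have hB : ((n:ℝ)+1) * x < ((⌊((n:ℝ)+1) * x / c⌋ : ℝ) + 1) * c :=
        (div_lt_iff₀ hcpos).mp h2
      have key : u n - x = ((⌊((n:ℝ)+1) * x / c⌋ : ℝ) * c - ((n:ℝ)+1) * x) / ((n:ℝ)+1) := by
        rw [hu]; field_simp
      rw [key, abs_div, abs_of_pos hn1]
      have hnum : |(⌊((n:ℝ)+1) * x / c⌋ : ℝ) * c - ((n:ℝ)+1) * x| ≤ c := by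
        rw [abs_le]; constructor <;> nlinarith
      exact div_le_div_of_nonneg_right hnum hn1.le |>.trans (le_of_eq rfl)
    have hulim : Filter.Tendsto u Filter.atTop (nhds x) := by
      have h0 : Filter.Tendsto (fun n : ℕ => c / (n+1)) Filter.atTop (nhds 0) := by
        apply Filter.Tendsto.div_atTop tendsto_const_nhds
        exact Filter.tendsto_atTop_add_const_right _ 1 tendsto_natCast_atTop_atTop
      have hub' : ∀ n : ℕ, ‖u n - x‖ ≤ c / (n+1) := fun n => by
        rw [Real.norm_eq_abs]; exact hub n
      have := squeeze_zero_norm hub' h0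
      rw [show nhds x = nhds (0 + x) by ring_nf]
      have h2 : Filter.Tendsto (fun n => (u n - x) + x) Filter.atTop (nhds (0 + x)) :=
        this.add tendsto_const_nhds
      simpa using h2
    have huball : ∀ᶠ n in Filter.atTop, u n ∈ Metric.ball (0:ℝ) ε := by
      have : ∀ᶠ n in Filter.atTop, |u n - x| < ε - |x| := by
        have h0 : Filter.Tendsto (fun n : ℕ => c / (n+1)) Filter.atTop (nhds 0) := by
          apply Filter.Tendsto.div_atTop tendsto_const_nhds
          exact Filter.tendsto_atTop_add_const_right _ 1 tendsto_natCast_atTop_atTop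
        have hev := h0.eventually (eventually_lt_nhds (by linarith : (0:ℝ) < ε - |x|))
        filter_upwards [hev] with n hn using lt_of_le_of_lt (hub n) hn
      filter_upwards [this] with n hn
      simp only [Metric.mem_ball, Real.dist_eq, sub_zero]
      calc |u n| ≤ |u n - x| + |x| := by
            have := abs_sub_abs_le_abs_sub (u n) x; linarith [abs_sub_abs_le_abs_sub (u n) x]
        _ < ε := by linarith
    have hgu : ∀ᶠ n in Filter.atTop, g (u n) = β * u n := by
      filter_upwards [huball] with n hn
      have hm : ((⌊((n:ℝ)+1) * x / c⌋ : ℝ) / ((n+1:ℕ):ℝ)) * c ∈ Metric.ball (0:ℝ) ε := by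
        push_cast; exact hn
      have h := hQ ⌊((n:ℝ)+1) * x / c⌋ (n+1) (Nat.succ_ne_zero n) hm
      rw [hu]; push_cast at h ⊢; exact h
    -- limits
    have hlim1 : Filter.Tendsto (fun n => g (u n)) Filter.atTop (nhds (g x)) := by
      apply (hcont x hxI).tendsto.comp
      rw [tendsto_nhdsWithin_iff]
      refine ⟨hulim, ?_⟩
      filter_upwards [huball] with n hn using hball hn
    have hlim2 : Filter.Tendsto (fun n => g (u n)) Filter.atTop (nhds (β * x)) := by
      have : Filter.Tendsto (fun n => β * u n) Filter.atTop (nhds (β * x)) :=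
        hulim.const_mul β
      exact this.congr' (by filter_upwards [hgu] with n hn using hn.symm)
    exact tendsto_nhds_unique hlim1 hlim2
  -- extend to all of J
  refine ⟨β, fun x hx => ?_⟩
  obtain ⟨n, hn⟩ := exists_nat_gt (|x| / ε)
  have hn0 : (0:ℝ) < n := lt_of_le_of_lt (by positivity) hn
  have hnn : n ≠ 0 := by exact_mod_cast hn0.ne'
  set y : ℝ := x / n with hy
  have hyJ : y ∈ J := by
    have h01 : (1:ℝ)/n ∈ Set.Icc (0:ℝ) 1 := by
      constructor
      · positivity
      · rw [div_le_one hn0]; exact_mod_cast Nat.one_le_iff_ne_zero.mpr hnn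
    have := hsm x hx _ h01
    rwa [show (1:ℝ)/n * x = y by rw [hy]; ring] at this
  have hyball : y ∈ Metric.ball (0:ℝ) ε := by
    simp only [Metric.mem_ball, Real.dist_eq, sub_zero, hy, abs_div]
    rw [abs_of_pos hn0, div_lt_iff₀ hn0]
    rw [div_lt_iff₀ hε] at hn
    linarith
  have hxy : (n:ℝ) * y = x := by rw [hy]; field_simp
  have := hnat n y hyJ (by rw [hxy]; exact hx)
  rw [hxy] at this
  rw [this, hball_lin y hyball, ← hxy]
  ring
end

section
/- Let J ⊆ (0,∞) be an interval containing 1 as an interior point, and let K : J → ℝ be multiplicative on J (K(xy) = K(x)K(y) whenever x, y, xy ∈ J), not identically zero, and Lebesgue measurable. Then either K ≡ 1 on J, or there exists α ∈ ℝ with K(x) = x^α for all x ∈ J. -/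
open MeasureTheory Filter Topology Pointwise

lemma local_cauchy (g : ℝ → ℝ) (hg : Measurable g) (η : ℝ) (hη : 0 < η)
    (hadd : ∀ s t : ℝ, |s| < η → |t| < η → |s + t| < η → g (s + t) = g s + g t) :
    ∃ δ : ℝ, 0 < δ ∧ δ ≤ η ∧ ∃ α : ℝ, ∀ t, |t| < δ → g t = α * t := by
  have g0 : g 0 = 0 := by
    have := hadd 0 0 (by simpa) (by simpa) (by simpa)
    simp only [add_zero] at this; linarith
  -- iterated additivity
  have gsmul : ∀ (n : ℕ) (t : ℝ), (∀ k : ℕ, k ≤ n → |(k : ℝ) * t| < η) →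
      g ((n : ℝ) * t) = n * g t := by
    intro n
    induction n with
    | zero => intro t _; simp [g0]
    | succ n ih =>
      intro t h
      have h1 : |t| < η := by simpa using h 1 (by omega)
      have hn : |(n : ℝ) * t| < η := h n (by omega)
      have hn1 : |(n : ℝ) * t + t| < η := by
        have := h (n + 1) le_rfl
        push_cast at this
        convert this using 2; ring
      have key := hadd ((n : ℝ) * t) t hn h1 hn1
      have ihn := ih t (fun k hk => h k (by omega))
      have : ((n : ℝ) + 1) * t = (n : ℝ) * t + t := by ring
      push_cast
      rw [this, key, ihn]; ring
  -- boundedness near 0 via Steinhaus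
  obtain ⟨δ, hδpos, hδle, M, hM0, hbd⟩ :
      ∃ δ : ℝ, 0 < δ ∧ δ ≤ η / 2 ∧ ∃ M : ℝ, 0 ≤ M ∧ ∀ t, |t| < δ → |g t| ≤ M := by
    set E : ℕ → Set ℝ := fun M => Set.Icc (-(η/4)) (η/4) ∩ {t | |g t| ≤ M} with hE
    have hEm : ∀ M, MeasurableSet (E M) := fun M =>
      measurableSet_Icc.inter (measurableSet_le hg.abs measurable_const)
    have hcover : Set.Icc (-(η/4)) (η/4) ⊆ ⋃ M, E M := fun t ht =>
      Set.mem_iUnion.2 ⟨⌈|g t|⌉₊, ht, by exact Nat.le_ceil (|g t|)⟩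
    obtain ⟨M, hM⟩ : ∃ M : ℕ, 0 < volume (E M) := by
      by_contra h
      push_neg at h
      have hnull : volume (⋃ M, E M) = 0 :=
        measure_iUnion_null fun M => le_antisymm (h M) zero_le
      have : volume (Set.Icc (-(η/4)) (η/4)) = 0 :=
        le_antisymm ((measure_mono hcover).trans hnull.le) zero_le
      rw [Real.volume_Icc] at this
      have : η / 4 - -(η / 4) ≤ 0 := by
        by_contra hc
        push_neg at hc
        exact (ENNReal.ofReal_pos.2 hc).ne' this
      linarith
    have hsub : E M - E M ∈ 𝓝 (0 : ℝ) :=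
      MeasureTheory.Measure.sub_mem_nhds_zero_of_addHaar_pos volume (E M) (hEm M) hM
    obtain ⟨ε, hεpos, hball⟩ := Metric.mem_nhds_iff.1 hsub
    refine ⟨min ε (η/2), lt_min hεpos (by linarith), min_le_right _ _, 2 * M, by positivity, ?_⟩
    intro t ht
    have htε : t ∈ Metric.ball (0:ℝ) ε := by
      rw [Metric.mem_ball, Real.dist_eq, sub_zero]
      exact lt_of_lt_of_le ht (min_le_left _ _)
    obtain ⟨u, hu, v, hv, huv⟩ := Set.mem_sub.1 (hball htε)
    obtain ⟨huI, huM⟩ := hu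
    obtain ⟨hvI, hvM⟩ := hv
    rw [Set.mem_Icc] at huI hvI
    have habs_u : |u| ≤ η/4 := abs_le.2 ⟨by linarith [huI.1], huI.2⟩
    have habs_v : |v| ≤ η/4 := abs_le.2 ⟨by linarith [hvI.1], hvI.2⟩
    have htη : |t| < η := lt_of_lt_of_le ht ((min_le_right _ _).trans (by linarith))
    have hsum : |t + v| < η := by
      rw [show t + v = u by linarith]
      exact lt_of_le_of_lt habs_u (by linarith)
    have hvη : |v| < η := lt_of_le_of_lt habs_v (by linarith)
    have := hadd t v htη hvη hsum
    rw [show t + v = u by linarith] at this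
    have : g t = g u - g v := by linarith
    rw [this]
    calc |g u - g v| ≤ |g u| + |g v| := abs_sub _ _
    _ ≤ M + M := add_le_add huM hvM
    _ = 2 * M := by ring
  -- continuity at 0
  have cont0 : Tendsto g (𝓝 0) (𝓝 0) := by
    rw [Metric.tendsto_nhds_nhds]
    intro ε hε
    obtain ⟨n, hn⟩ := exists_nat_gt (M / ε)
    set n' : ℕ := max n 1 with hn'
    have hn'1 : 1 ≤ n'
    · exact le_max_right _ _
    have hn'pos : (0:ℝ) < n' := by exact_mod_cast hn'1
    have hn'gt : M / ε < n' := lt_of_lt_of_le hn (by exact_mod_cast le_max_left _ _)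
    refine ⟨δ / n', by positivity, ?_⟩
    intro t ht
    rw [Real.dist_eq, sub_zero] at ht ⊢
    have hlt : (n' : ℝ) * |t| < δ := by
      calc (n' : ℝ) * |t| < n' * (δ / n') := by
            rcases eq_or_lt_of_le (abs_nonneg t) with h0 | h0
            · rw [← h0, mul_zero]; positivity
            · exact (mul_lt_mul_iff_right₀ hn'pos).2 ht
      _ = δ := by field_simp
    have hkt : ∀ k : ℕ, k ≤ n' → |(k : ℝ) * t| < η := by
      intro k hk
      have hk' : (k : ℝ) ≤ n' := by exact_mod_cast hk
      calc |(k : ℝ) * t| = k * |t| := by rw [abs_mul, Nat.abs_cast]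
      _ ≤ n' * |t| := by nlinarith [abs_nonneg t]
      _ < δ := hlt
      _ ≤ η := by linarith
    have hsm := gsmul n' t hkt
    have hbdt : |g ((n' : ℝ) * t)| ≤ M := by
      apply hbd
      rw [abs_mul, Nat.abs_cast]
      exact hlt
    rw [hsm, abs_mul, Nat.abs_cast] at hbdt
    calc |g t| ≤ M / n' := by
          rw [le_div_iff₀ hn'pos]; linarith
    _ < ε := by
        rw [div_lt_iff₀ hn'pos]
        calc M = ε * (M / ε) := by field_simp
        _ < ε * n' := (mul_lt_mul_iff_right₀ hε).2 hn'gt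
  -- linearity on (-δ, δ)
  set c : ℝ := δ / 2 with hc
  have hcpos : 0 < c := by positivity
  set α : ℝ := g c / c with hα
  have key : ∀ t : ℝ, 0 < t → t < δ → g t = α * t := by
    intro t ht0 htδ
    set m : ℕ → ℕ := fun n => ⌊(t / c) * n⌋₊ with hm
    set r : ℕ → ℝ := fun n => t - (m n : ℝ) * (c / n) with hr
    have htc : 0 ≤ t / c := by positivity
    have claim : ∀ n : ℕ, 1 ≤ n → g t = (m n : ℝ) / n * g c + g (r n) := by
      intro n hn1
      have hnpos : (0:ℝ) < n := by exact_mod_cast hn1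
      have hmle : (m n : ℝ) * (c / n) ≤ t := by
        have h1 : (m n : ℝ) ≤ (t / c) * n := Nat.floor_le (by positivity)
        have h2 : (m n : ℝ) * (c / n) ≤ ((t / c) * n) * (c / n) := by
          apply mul_le_mul_of_nonneg_right h1 (by positivity)
        calc (m n : ℝ) * (c / n) ≤ ((t / c) * n) * (c / n) := h2
        _ = t := by field_simp
      have hrlt : r n < c / n := by
        have h1 : (t / c) * n < (m n : ℝ) + 1 := Nat.lt_floor_add_one _
        have h2 : t < ((m n : ℝ) + 1) * (c / n) := by
          have := mul_lt_mul_of_pos_right h1 (show (0:ℝ) < c / n by positivity)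
          calc t = ((t / c) * n) * (c / n) := by field_simp
          _ < ((m n : ℝ) + 1) * (c / n) := this
        simp only [hr]
        nlinarith
      have hrnn : 0 ≤ r n := by simp only [hr]; linarith
      have hgd : ∀ k : ℕ, k ≤ m n → |(k : ℝ) * (c / n)| < η := by
        intro k hk
        have hk' : (k : ℝ) ≤ m n := by exact_mod_cast hk
        have : (k : ℝ) * (c / n) ≤ (m n : ℝ) * (c / n) :=
          mul_le_mul_of_nonneg_right hk' (by positivity)
        rw [abs_of_nonneg (by positivity)]
        calc (k:ℝ) * (c / n) ≤ (m n : ℝ) * (c / n) := this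
        _ ≤ t := hmle
        _ < δ := htδ
        _ ≤ η := hδle.trans (by linarith)
      have hgn : ∀ k : ℕ, k ≤ n → |(k : ℝ) * (c / n)| < η := by
        intro k hk
        have hk' : (k : ℝ) ≤ n := by exact_mod_cast hk
        rw [abs_of_nonneg (by positivity)]
        calc (k:ℝ) * (c / n) ≤ (n : ℝ) * (c / n) :=
          mul_le_mul_of_nonneg_right hk' (by positivity)
        _ = c := by field_simp
        _ < δ := by simp only [hc]; linarith
        _ ≤ η := hδle.trans (by linarith)
      have hgcn : g c = n * g (c / n) := by
        have := gsmul n (c / n) hgn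
        rw [show (n : ℝ) * (c / n) = c by field_simp] at this
        exact this
      have hgm : g ((m n : ℝ) * (c / n)) = m n * g (c / n) := gsmul (m n) (c / n) hgd
      have hsplit : g t = g ((m n : ℝ) * (c / n)) + g (r n) := by
        have e1 : |(m n : ℝ) * (c / n)| < η := by
          rw [abs_of_nonneg (by positivity)]
          calc (m n : ℝ) * (c / n) ≤ t := hmle
          _ < δ := htδ
          _ ≤ η := hδle.trans (by linarith)
        have e2 : |r n| < η := by
          rw [abs_of_nonneg hrnn]
          calc r n < c / n := hrlt
          _ ≤ c := by
              rw [div_le_iff₀ hnpos]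
              have hn1' : (1:ℝ) ≤ n := by exact_mod_cast hn1
              nlinarith [hcpos, hn1']
          _ < η := by simp only [hc]; linarith
        have e3 : |(m n : ℝ) * (c / n) + r n| < η := by
          rw [show (m n : ℝ) * (c / n) + r n = t by simp only [hr]; ring]
          rw [abs_of_pos ht0]
          linarith [hδle.trans (show η / 2 ≤ η by linarith)]
        have := hadd ((m n : ℝ) * (c / n)) (r n) e1 e2 e3
        rw [show (m n : ℝ) * (c / n) + r n = t by simp only [hr]; ring] at this
        exact this
      rw [hsplit, hgm]
      have : g (c / n) = g c / n := by rw [hgcn]; field_simp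
      rw [this]
      ring
    -- take limits
    have hml : Tendsto (fun nn : ℕ => (m nn : ℝ) / nn) atTop (𝓝 (t / c)) := by
      have := tendsto_nat_floor_mul_div_atTop (R := ℝ) htc
      exact this.comp tendsto_natCast_atTop_atTop
    have hrl : Tendsto r atTop (𝓝 0) := by
      have h1 : Tendsto (fun nn : ℕ => t - ((m nn : ℝ) / nn) * c) atTop
          (𝓝 (t - (t / c) * c)) := tendsto_const_nhds.sub (hml.mul_const c)
      rw [show t - (t / c) * c = 0 by field_simp; ring] at h1
      apply h1.congr
      intro nn
      simp only [hr]
      ring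
    have hfull : Tendsto (fun nn : ℕ => (m nn : ℝ) / nn * g c + g (r nn)) atTop
        (𝓝 ((t / c) * g c + 0)) := (hml.mul_const (g c)).add (cont0.comp hrl)
    have heq : (fun _ : ℕ => g t) =ᶠ[atTop] (fun nn : ℕ => (m nn : ℝ) / nn * g c + g (r nn)) := by
      filter_upwards [eventually_ge_atTop 1] with nn hnn
      exact claim nn hnn
    have hconst : Tendsto (fun nn : ℕ => (m nn : ℝ) / nn * g c + g (r nn)) atTop
        (𝓝 (g t)) := Tendsto.congr' heq tendsto_const_nhds
    have := tendsto_nhds_unique hconst hfull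
    rw [this, add_zero, hα]
    field_simp
  refine ⟨δ, hδpos, hδle.trans (by linarith), α, ?_⟩
  intro t ht
  rcases lt_trichotomy t 0 with h0 | h0 | h0
  · have hmt : g (-t) = α * (-t) := key (-t) (by linarith) (by rwa [abs_of_neg h0] at ht)
    have hδη : δ ≤ η := hδle.trans (by linarith)
    have h1 : |(-t)| < η := by rw [abs_neg]; exact ht.trans_le hδη
    have h2 : |t + -t| < η := by simpa using hη
    have := hadd t (-t) (ht.trans_le hδη) h1 h2
    simp only [add_neg_cancel, g0] at this
    have : g t = - g (-t) := by linarith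
    rw [this, hmt]; ring
  · rw [h0, g0]; ring
  · exact key t h0 (by rwa [abs_of_pos h0] at ht)
theorem multiplicative_measurable_on_positive_interval
    (J : Set ℝ) (hJpos : J ⊆ Set.Ioi (0 : ℝ)) (hJconv : Convex ℝ J)
    (h1J : (1 : ℝ) ∈ interior J)
    (K : ℝ → ℝ)
    (hmult : ∀ x ∈ J, ∀ y ∈ J, x * y ∈ J → K (x * y) = K x * K y)
    (hnz : ¬ (∀ x ∈ J, K x = 0))
    (hmeas : Measurable (J.restrict K)) :
    (∀ x ∈ J, K x = 1) ∨ ∃ α : ℝ, ∀ x ∈ J, K x = x ^ α := by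
  classical
  have hJord : J.OrdConnected := hJconv.ordConnected
  have hJmeas : MeasurableSet J := hJord.measurableSet
  have h1 : (1 : ℝ) ∈ J := interior_subset h1J
  have K1 : K 1 = 1 := by
    have hfix : ∀ x ∈ J, K x = K 1 * K x := by
      intro x hx
      have := hmult 1 h1 x hx (by simpa using hx)
      simpa using this
    by_contra h
    apply hnz
    intro x hx
    have h2 := hfix x hx
    have : K x * (1 - K 1) = 0 := by linarith [h2]
    rcases mul_eq_zero.1 this with h3 | h3
    · exact h3
    · exact absurd (by linarith : K 1 = 1) h
  have hsqrtJ : ∀ x ∈ J, Real.sqrt x ∈ J := by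
    intro x hx
    have hx0 : 0 < x := hJpos hx
    rcases le_total x 1 with hle | hle
    · have hs1 : Real.sqrt x ≤ 1 := Real.sqrt_le_one.mpr hle
      have hsq' : Real.sqrt x ^ 2 = x := Real.sq_sqrt hx0.le
      have hsn : 0 ≤ Real.sqrt x := Real.sqrt_nonneg x
      exact hJord.out hx h1 ⟨by nlinarith, hs1⟩
    · have hs1 : 1 ≤ Real.sqrt x := Real.one_le_sqrt.mpr hle
      have hsq' : Real.sqrt x ^ 2 = x := Real.sq_sqrt hx0.le
      exact hJord.out h1 hx ⟨hs1, by nlinarith⟩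
  have hsq : ∀ x ∈ J, K x = (K (Real.sqrt x)) ^ 2 := by
    intro x hx
    have hx0 : 0 < x := hJpos hx
    have hs := hsqrtJ x hx
    have hmm : Real.sqrt x * Real.sqrt x = x := Real.mul_self_sqrt hx0.le
    have := hmult _ hs _ hs (by rw [hmm]; exact hx)
    rw [hmm] at this
    rw [this]; ring
  have Knz : ∀ x ∈ J, K x ≠ 0 := by
    intro x hx hK0
    -- iterated square roots of x are zeros of K converging to 1
    set z : ℕ → ℝ := fun n => Real.sqrt^[n] x with hz
    have hz0 : z 0 = x := rfl
    have hzs : ∀ n, z (n + 1) = Real.sqrt (z n) := by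
      intro n
      simp only [hz, Function.iterate_succ_apply']
    have hzJ : ∀ n, z n ∈ J := by
      intro n
      induction n with
      | zero => rw [hz0]; exact hx
      | succ n ih => rw [hzs]; exact hsqrtJ _ ih
    have hzpos : ∀ n, 0 < z n := fun n => hJpos (hzJ n)
    have hzK : ∀ n, K (z n) = 0 := by
      intro n
      induction n with
      | zero => rw [hz0]; exact hK0
      | succ n ih =>
        have := hsq (z n) (hzJ n)
        rw [ih] at this
        have := pow_eq_zero_iff (n := 2) (by norm_num) |>.1 this.symm
        rw [hzs]; exact this
    -- z n → 1
    have hzrpow : ∀ n, z n = x ^ (((1:ℝ)/2) ^ n) := by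
      intro n
      induction n with
      | zero => simp [hz0]
      | succ n ih =>
        rw [hzs, ih, Real.sqrt_eq_rpow, ← Real.rpow_mul (hJpos hx).le]
        congr 1
    have hx0 : 0 < x := hJpos hx
    have htend : Filter.Tendsto z Filter.atTop (nhds 1) := by
      have hhalf : Filter.Tendsto (fun n : ℕ => ((1:ℝ)/2) ^ n) Filter.atTop (nhds 0) :=
        tendsto_pow_atTop_nhds_zero_of_lt_one (by norm_num) (by norm_num)
      have hcont : Filter.Tendsto (fun y : ℝ => x ^ y) (nhds 0) (nhds 1) := by
        have : Continuous (fun y : ℝ => x ^ y) := by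
          have : (fun y : ℝ => x ^ y) = fun y => Real.exp (Real.log x * y) := by
            funext y
            rw [Real.rpow_def_of_pos hx0]
          rw [this]
          exact Real.continuous_exp.comp (continuous_const.mul continuous_id)
        have h0 := this.tendsto 0
        rwa [Real.rpow_zero] at h0
      have := hcont.comp hhalf
      apply this.congr
      intro n
      exact (hzrpow n).symm
    have hinv : Filter.Tendsto (fun n => (z n)⁻¹) Filter.atTop (nhds 1) := by
      have := htend.inv₀ (by norm_num)
      simpa using this
    have hev : ∀ᶠ n in Filter.atTop, (z n)⁻¹ ∈ interior J :=
      hinv.eventually (isOpen_interior.mem_nhds h1J)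
    obtain ⟨n, hn⟩ := hev.exists
    have hinvJ : (z n)⁻¹ ∈ J := interior_subset hn
    have := hmult (z n) (hzJ n) ((z n)⁻¹) hinvJ
      (by rw [mul_inv_cancel₀ (hzpos n).ne']; exact h1)
    rw [mul_inv_cancel₀ (hzpos n).ne', K1, hzK n, zero_mul] at this
    exact one_ne_zero this
  have Kpos : ∀ x ∈ J, 0 < K x := by
    intro x hx
    rw [hsq x hx]
    exact pow_two_pos_of_ne_zero (Knz _ (hsqrtJ x hx))
  -- pass to additive setting
  set K' : ℝ → ℝ := fun x => if h : x ∈ J then J.restrict K ⟨x, h⟩ else 1 with hK'def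
  have hK'meas : Measurable K' := Measurable.dite hmeas measurable_const hJmeas
  have hK'eq : ∀ x ∈ J, K' x = K x := by
    intro x hx
    simp only [hK'def, dif_pos hx, Set.restrict_apply]
    rfl
  set g : ℝ → ℝ := fun t => Real.log (K' (Real.exp t)) with hgdef
  have hg : Measurable g := Real.measurable_log.comp (hK'meas.comp Real.measurable_exp)
  have hgJ : ∀ t : ℝ, Real.exp t ∈ J → g t = Real.log (K (Real.exp t)) := by
    intro t ht
    simp only [hgdef, hK'eq _ ht]
  have hgaddJ : ∀ s t : ℝ, Real.exp s ∈ J → Real.exp t ∈ J → Real.exp (s + t) ∈ J →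
      g (s + t) = g s + g t := by
    intro s t hs ht hst
    rw [hgJ _ hs, hgJ _ ht, hgJ _ hst, Real.exp_add]
    rw [hmult _ hs _ ht (by rw [← Real.exp_add]; exact hst)]
    exact Real.log_mul (Knz _ hs) (Knz _ ht)
  obtain ⟨η, hηpos, hη⟩ : ∃ η : ℝ, 0 < η ∧ ∀ t : ℝ, |t| < η → Real.exp t ∈ J := by
    have h1n : interior J ∈ nhds (1 : ℝ) := isOpen_interior.mem_nhds h1J
    have hpre : Real.exp ⁻¹' (interior J) ∈ nhds (0 : ℝ) := by
      have := Real.continuous_exp.continuousAt (x := (0:ℝ))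
      apply this.preimage_mem_nhds
      rwa [Real.exp_zero]
    obtain ⟨η, hηpos, hball⟩ := Metric.mem_nhds_iff.1 hpre
    refine ⟨η, hηpos, fun t ht => ?_⟩
    have : t ∈ Metric.ball (0:ℝ) η := by
      rw [Metric.mem_ball, Real.dist_eq, sub_zero]; exact ht
    exact interior_subset (hball this)
  have hadd : ∀ s t : ℝ, |s| < η → |t| < η → |s + t| < η → g (s + t) = g s + g t :=
    fun s t hs ht hst => hgaddJ s t (hη s hs) (hη t ht) (hη _ hst)
  obtain ⟨δ, hδpos, hδle, α, hlin⟩ := local_cauchy g hg η hηpos hadd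
  -- extension to all of J by halving
  have hhalfJ : ∀ u : ℝ, Real.exp u ∈ J → Real.exp (u / 2) ∈ J := by
    intro u hu
    rcases le_total u 0 with h0 | h0
    · refine hJord.out hu h1 ⟨Real.exp_le_exp.2 (by linarith), Real.exp_le_one_iff.2 (by linarith)⟩
    · refine hJord.out h1 hu ⟨Real.one_le_exp (by linarith), Real.exp_le_exp.2 (by linarith)⟩
  have hpowJ : ∀ (n : ℕ) (u : ℝ), Real.exp u ∈ J → Real.exp (u / 2 ^ n) ∈ J := by
    intro n
    induction n with
    | zero => intro u hu; simpa using hu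
    | succ n ih =>
      intro u hu
      have := hhalfJ _ (ih u hu)
      rw [show u / 2 ^ n / 2 = u / 2 ^ (n + 1) by rw [pow_succ]; ring] at this
      exact this
  have hdouble : ∀ (n : ℕ) (u : ℝ), Real.exp u ∈ J → g u = 2 ^ n * g (u / 2 ^ n) := by
    intro n
    induction n with
    | zero => intro u hu; simp
    | succ n ih =>
      intro u hu
      have step : g (u / 2 ^ n) = 2 * g (u / 2 ^ (n + 1)) := by
        have hs : Real.exp (u / 2 ^ (n + 1)) ∈ J := hpowJ (n + 1) u hu
        have hsum : u / 2 ^ (n + 1) + u / 2 ^ (n + 1) = u / 2 ^ n := by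
          rw [pow_succ]; ring
        have := hgaddJ (u / 2 ^ (n + 1)) (u / 2 ^ (n + 1)) hs hs
          (by rw [hsum]; exact hpowJ n u hu)
        rw [hsum] at this
        rw [this]; ring
      rw [ih u hu, step, pow_succ]
      ring
  have hlinJ : ∀ t : ℝ, Real.exp t ∈ J → g t = α * t := by
    intro t ht
    obtain ⟨n, hn⟩ := pow_unbounded_of_one_lt (|t| / δ) (one_lt_two (α := ℝ))
    have h2n : (0:ℝ) < 2 ^ n := by positivity
    have hsmall : |t / 2 ^ n| < δ := by
      rw [abs_div, abs_of_pos h2n, div_lt_iff₀ h2n]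
      rw [div_lt_iff₀ hδpos] at hn
      linarith
    rw [hdouble n t ht, hlin _ hsmall]
    field_simp
  -- conclude
  right
  refine ⟨α, fun x hx => ?_⟩
  have hx0 : 0 < x := hJpos hx
  have hexp : Real.exp (Real.log x) = x := Real.exp_log hx0
  have hgx : g (Real.log x) = Real.log (K x) := by
    rw [hgJ _ (by rw [hexp]; exact hx), hexp]
  have := hlinJ (Real.log x) (by rw [hexp]; exact hx)
  rw [hgx] at this
  calc K x = Real.exp (Real.log (K x)) := (Real.exp_log (Kpos x hx)).symm
  _ = Real.exp (α * Real.log x) := by rw [this]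
  _ = x ^ α := by rw [Real.rpow_def_of_pos hx0, mul_comm]
end

section
/- Let J ⊆ ℝ be an interval containing 1 as an interior point and K : J → ℝ multiplicative on J with K not identically zero. If K(x₀) = 0 for some x₀ ∈ J with x₀ > 0, then K ≡ 0 on J ∩ (0,∞). -/
theorem multiplicative_vanishing_at_positive_point
    (J : Set ℝ) (hJconv : Convex ℝ J) (h1J : (1 : ℝ) ∈ interior J)
    (K : ℝ → ℝ)
    (hmult : ∀ x ∈ J, ∀ y ∈ J, x * y ∈ J → K (x * y) = K x * K y)
    (hnz : ¬ (∀ x ∈ J, K x = 0))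
    (x₀ : ℝ) (hx₀J : x₀ ∈ J) (hx₀pos : 0 < x₀) (hK₀ : K x₀ = 0) :
    ∀ x ∈ J, 0 < x → K x = 0 := by
  have h1 : (1:ℝ) ∈ J := interior_subset h1J
  have hseg : Set.uIcc (1:ℝ) x₀ ⊆ J := by
    rw [← segment_eq_uIcc]; exact hJconv.segment_subset h1 hx₀J
  have hmem : ∀ s : ℝ, 0 ≤ s → s ≤ 1 → x₀ ^ s ∈ J := by
    intro s hs0 hs1
    apply hseg
    rcases le_total x₀ 1 with h | h
    · rw [Set.mem_uIcc]
      right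
      refine ⟨?_, Real.rpow_le_one hx₀pos.le h hs0⟩
      calc x₀ = x₀ ^ (1:ℝ) := (Real.rpow_one _).symm
        _ ≤ x₀ ^ s := Real.rpow_le_rpow_of_exponent_ge hx₀pos h hs1
    · rw [Set.mem_uIcc]
      left
      refine ⟨Real.one_le_rpow h hs0, ?_⟩
      calc x₀ ^ s ≤ x₀ ^ (1:ℝ) := Real.rpow_le_rpow_of_exponent_le h hs1
        _ = x₀ := Real.rpow_one _
  have hsle : ∀ m : ℕ, ((2:ℝ)⁻¹ ^ m) ≤ 1 :=
    fun m => pow_le_one₀ (by norm_num) (by norm_num)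
  have hzero : ∀ m : ℕ, K (x₀ ^ ((2:ℝ)⁻¹ ^ m)) = 0 := by
    intro m
    induction m with
    | zero => simpa using hK₀
    | succ n ih =>
      have hJ1 := hmem _ (by positivity) (hsle (n+1))
      have hkey : x₀ ^ ((2:ℝ)⁻¹ ^ (n+1)) * x₀ ^ ((2:ℝ)⁻¹ ^ (n+1)) = x₀ ^ ((2:ℝ)⁻¹ ^ n) := by
        rw [← Real.rpow_add hx₀pos]
        ring_nf
      have hJn := hmem _ (by positivity) (hsle n)
      have h2 := hmult _ hJ1 _ hJ1 (by rw [hkey]; exact hJn)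
      rw [hkey, ih] at h2
      exact mul_self_eq_zero.mp h2.symm
  have htend : Filter.Tendsto (fun m : ℕ => x₀ ^ (-((2:ℝ)⁻¹ ^ m))) Filter.atTop (nhds 1) := by
    have h2 : Filter.Tendsto (fun m : ℕ => -((2:ℝ)⁻¹ ^ m)) Filter.atTop (nhds 0) := by
      have h3 := tendsto_pow_atTop_nhds_zero_of_lt_one (by norm_num : (0:ℝ) ≤ 2⁻¹)
        (by norm_num : (2:ℝ)⁻¹ < 1)
      simpa using h3.neg
    have h4 := (Real.continuousAt_const_rpow (a := x₀) (b := 0) hx₀pos.ne').tendsto.comp h2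
    simpa [Real.rpow_zero, Function.comp_def] using h4
  have hev : ∀ᶠ m : ℕ in Filter.atTop, x₀ ^ (-((2:ℝ)⁻¹ ^ m)) ∈ J :=
    htend.eventually_mem (mem_interior_iff_mem_nhds.mp h1J)
  obtain ⟨m, hm⟩ := hev.exists
  have hK1 : K 1 = 0 := by
    have hkey : x₀ ^ ((2:ℝ)⁻¹ ^ m) * x₀ ^ (-((2:ℝ)⁻¹ ^ m)) = 1 := by
      rw [← Real.rpow_add hx₀pos]; simp
    have h5 := hmult _ (hmem _ (by positivity) (hsle m)) _ hm (by rw [hkey]; exact h1)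
    rw [hkey, hzero m] at h5
    simpa using h5
  intro x hx _
  have h6 := hmult x hx 1 h1 (by simpa using hx)
  rw [mul_one] at h6
  rw [h6, hK1, mul_zero]
end

section
/- Let I ⊆ J ⊆ ℝ be intervals containing 1 as an interior point, and let K : J → ℝ be not identically zero, Lebesgue measurable on I, and multiplicative on J (K(xy) = K(x)K(y) whenever x, y, xy ∈ J). Then either K ≡ 1 on J, or there exists α ∈ ℝ such that for all x ∈ J, either K(x) = |x|^α (with K(0)=0 if 0 ∈ J), or K(x) = sgn(x)|x|^α (with K(0)=0 if 0 ∈ J). -/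
open MeasureTheory Set Pointwise

private lemma localAdd_linear (h : ℝ → ℝ) (hm : Measurable h) (δ : ℝ) (hδ : 0 < δ)
    (hadd : ∀ s t : ℝ, |s| < δ → |t| < δ → |s + t| < δ → h (s + t) = h s + h t) :
    ∃ α : ℝ, ∀ t : ℝ, |t| < δ → h t = α * t := by
  have h0 : h 0 = 0 := by
    have := hadd 0 0 (by simpa using hδ) (by simpa using hδ) (by simpa using hδ)
    simp at this
    linarith
  have hscale : ∀ (m : ℕ) (t : ℝ), |(m : ℝ) * t| < δ → h ((m : ℝ) * t) = m * h t := by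
    intro m
    induction m with
    | zero => intro t ht; simpa using h0
    | succ m ih =>
      intro t ht
      push_cast at ht ⊢
      have hab := abs_nonneg t
      have hmn : (0:ℝ) ≤ (m:ℝ) := Nat.cast_nonneg m
      have habs0 : |((m:ℝ)+1) * t| = ((m:ℝ)+1) * |t| := by
        rw [abs_mul, abs_of_nonneg (by positivity : (0:ℝ) ≤ (m:ℝ)+1)]
      have habs1 : |(m:ℝ) * t| < δ := by
        rw [abs_mul, abs_of_nonneg hmn]
        rw [habs0] at ht
        nlinarith
      have habs2 : |t| < δ := by
        rw [habs0] at ht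
        nlinarith
      have heq : ((m:ℝ)+1) * t = (m:ℝ)*t + t := by ring
      rw [heq, hadd ((m:ℝ)*t) t habs1 habs2 (by rw [← heq]; exact ht), ih t habs1]
      ring
  set A : ℕ → Set ℝ := fun n => {t | |t| < δ/2} ∩ {t | |h t| ≤ (n:ℝ)} with hA
  have hAm : ∀ n, MeasurableSet (A n) := by
    intro n
    exact (measurableSet_lt (measurable_id.abs) measurable_const).inter
      (measurableSet_le (hm.abs) measurable_const)
  have hcover : Set.Ioo (-(δ/2)) (δ/2) ⊆ ⋃ n, A n := by
    intro t ht
    obtain ⟨n, hn⟩ := exists_nat_ge |h t|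
    rw [Set.mem_Ioo] at ht
    exact Set.mem_iUnion.2 ⟨n, ⟨abs_lt.2 ⟨by linarith [ht.1], ht.2⟩, hn⟩⟩
  have hex : ∃ n, 0 < volume (A n) := by
    by_contra hc
    push_neg at hc
    have hz : ∀ n, volume (A n) = 0 := fun n => le_antisymm (hc n) zero_le
    have h1 : volume (⋃ n, A n) = 0 := measure_iUnion_null hz
    have h2 : volume (Set.Ioo (-(δ/2)) (δ/2)) = 0 := measure_mono_null hcover h1
    rw [Real.volume_Ioo] at h2
    have h3 : δ/2 - -(δ/2) ≤ 0 := ENNReal.ofReal_eq_zero.1 h2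
    linarith
  obtain ⟨n, hn⟩ := hex
  have hnh := MeasureTheory.Measure.sub_mem_nhds_zero_of_addHaar_pos volume (A n) (hAm n) hn
  obtain ⟨η, hη, hball⟩ := Metric.mem_nhds_iff.1 hnh
  set η' := min η (δ/2) with hη'def
  have hη' : 0 < η' := lt_min hη (by linarith)
  have hη'δ : η' ≤ δ/2 := min_le_right _ _
  have hbound : ∀ t : ℝ, |t| < η' → |h t| ≤ 2 * n := by
    intro t ht
    have hmem : t ∈ A n - A n := hball
      (by rw [Metric.mem_ball, Real.dist_eq, sub_zero]; exact ht.trans_le (min_le_left _ _))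
    obtain ⟨a, ha, b, hb, hab⟩ := Set.mem_sub.1 hmem
    have h1 : |t| < δ := by linarith [ht]
    have h2 : |b| < δ := by have := hb.1; simp only [Set.mem_setOf_eq] at this; linarith
    have h3 : |t + b| < δ := by
      have : t + b = a := by linarith [hab]
      rw [this]
      have := ha.1; simp only [Set.mem_setOf_eq] at this; linarith
    have heq := hadd t b h1 h2 h3
    rw [show t + b = a by linarith [hab]] at heq
    have hta : |h t| = |h a - h b| := by rw [heq]; congr 1; ring
    have hha : |h a| ≤ (n:ℝ) := ha.2
    have hhb : |h b| ≤ (n:ℝ) := hb.2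
    calc |h t| = |h a - h b| := hta
      _ ≤ |h a| + |h b| := abs_sub _ _
      _ ≤ 2 * n := by linarith
  have hint : MeasureTheory.IntegrableOn h (Set.Ioo (-η') η') := by
    apply MeasureTheory.Measure.integrableOn_of_bounded (M := 2*n)
    · rw [Real.volume_Ioo]; exact ENNReal.ofReal_ne_top
    · exact hm.aestronglyMeasurable
    · apply (MeasureTheory.ae_restrict_iff' measurableSet_Ioo).2
      apply MeasureTheory.ae_of_all
      intro t ht
      rw [Real.norm_eq_abs]
      exact hbound t (abs_lt.2 ⟨ht.1, ht.2⟩)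
  have hii : ∀ a b : ℝ, |a| < η' → |b| < η' → IntervalIntegrable h volume a b := by
    intro a b ha hb
    rw [intervalIntegrable_iff]
    apply hint.mono_set
    intro x hx
    rw [Set.mem_uIoc] at hx
    have ha' := abs_lt.1 ha
    have hb' := abs_lt.1 hb
    rcases hx with ⟨h1, h2⟩ | ⟨h1, h2⟩ <;> exact ⟨by linarith, by linarith⟩
  set F : ℝ → ℝ := fun t => ∫ x in (0:ℝ)..t, h x with hF
  have hkey : ∀ s t : ℝ, |s| < η'/2 → |t| < η'/2 → F (s+t) = F s + (t * h s + F t) := by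
    intro s t hs ht
    have hs1 : |s| < η' := by linarith
    have ht1 : |t| < η' := by linarith
    have hst : |s + t| < η' := lt_of_le_of_lt (abs_add_le s t) (by linarith)
    have h0' : |(0:ℝ)| < η' := by simpa using hη'
    have e1 : F (s+t) = F s + ∫ x in s..(s+t), h x :=
      (intervalIntegral.integral_add_adjacent_intervals (hii 0 s h0' hs1) (hii s (s+t) hs1 hst)).symm
    have e2 : (∫ x in s..(s+t), h x) = ∫ x in (0:ℝ)..t, h (s + x) := by
      rw [intervalIntegral.integral_comp_add_left h s, add_zero]
    have e3 : (∫ x in (0:ℝ)..t, h (s + x)) = ∫ x in (0:ℝ)..t, (h s + h x) := by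
      apply intervalIntegral.integral_congr
      intro x hx
      rw [Set.mem_uIcc] at hx
      have h1t := le_abs_self t
      have h2t := neg_abs_le t
      have h3t := abs_nonneg t
      have hxt : |x| ≤ |t| := by
        rcases hx with ⟨hxa, hxb⟩ | ⟨hxa, hxb⟩ <;> rw [abs_le] <;>
          exact ⟨by linarith, by linarith⟩
      have hsδ : |s| < δ := by linarith
      have hxδ : |x| < δ := by linarith
      have hsxδ : |s + x| < δ := lt_of_le_of_lt (abs_add_le s x) (by linarith)
      exact hadd s x hsδ hxδ hsxδ
    have e4 : (∫ x in (0:ℝ)..t, (h s + h x)) = t * h s + F t := by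
      rw [intervalIntegral.integral_add intervalIntegrable_const
        (hii 0 t (by simpa using hη') ht1), intervalIntegral.integral_const]
      simp [hF, smul_eq_mul]
    rw [e1, e2, e3, e4]
  have hsym : ∀ s t : ℝ, |s| < η'/2 → |t| < η'/2 → t * h s = s * h t := by
    intro s t hs ht
    have e1 := hkey s t hs ht
    have e2 := hkey t s ht hs
    rw [add_comm t s] at e2
    linarith
  refine ⟨h (η'/4) / (η'/4), ?_⟩
  have hα : ∀ s : ℝ, |s| < η'/2 → h s = (h (η'/4) / (η'/4)) * s := by
    intro s hs
    have h4 : |η'/4| < η'/2 := by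
      rw [abs_of_pos (by linarith : (0:ℝ) < η'/4)]; linarith
    have hsy := hsym s (η'/4) hs h4
    have hne : (η'/4 : ℝ) ≠ 0 := by positivity
    rw [div_mul_eq_mul_div, eq_div_iff hne]
    linarith
  intro t ht
  obtain ⟨m, hmgt⟩ := exists_nat_gt (|t| / (η'/2))
  have hnn : 0 ≤ |t| / (η'/2) := div_nonneg (abs_nonneg t) (by linarith)
  have hm0 : (0:ℝ) < m := lt_of_le_of_lt hnn hmgt
  have hmne : (m:ℝ) ≠ 0 := ne_of_gt hm0
  have hsmall : |t / m| < η'/2 := by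
    rw [abs_div, abs_of_pos hm0, div_lt_iff₀ hm0, mul_comm]
    exact (div_lt_iff₀ (by linarith : (0:ℝ) < η'/2)).1 hmgt
  have hts : ((m:ℝ)) * (t / m) = t := by field_simp
  have hms : |(m:ℝ) * (t/m)| < δ := by rw [hts]; exact ht
  have hsc := hscale m (t/m) hms
  rw [hts] at hsc
  rw [hsc, hα (t/m) hsmall]
  field_simp

noncomputable def phi (α : ℝ) (x : ℝ) : ℝ := if x = 0 then 0 else |x| ^ α

noncomputable def psi (α : ℝ) (x : ℝ) : ℝ :=
  if x = 0 then 0 else Real.sign x * |x| ^ α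

set_option maxHeartbeats 2000000 in
theorem multiplicative_locally_measurable_classification
    (I J : Set ℝ) (hIJ : I ⊆ J) (hIconv : Convex ℝ I) (hJconv : Convex ℝ J)
    (h1I : (1 : ℝ) ∈ interior I)
    (K : ℝ → ℝ)
    (hnz : ¬ (∀ x ∈ J, K x = 0))
    (hmeas : Measurable (I.restrict K))
    (hmult : ∀ x ∈ J, ∀ y ∈ J, x * y ∈ J → K (x * y) = K x * K y) :
    (∀ x ∈ J, K x = 1) ∨
      ∃ α : ℝ, (∀ x ∈ J, K x = phi α x) ∨ (∀ x ∈ J, K x = psi α x) := by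
  classical
  have h1I' : (1:ℝ) ∈ I := interior_subset h1I
  have h1J : (1:ℝ) ∈ J := hIJ h1I'
  have hK1sq : K 1 = K 1 * K 1 := by
    have := hmult 1 h1J 1 h1J (by rw [one_mul]; exact h1J)
    rwa [one_mul] at this
  have hK1 : K 1 = 1 := by
    by_contra hne
    have h10 : K 1 = 0 := by
      have hfac : K 1 * (1 - K 1) = 0 := by nlinarith
      rcases mul_eq_zero.1 hfac with h | h
      · exact h
      · exact absurd (by linarith : K 1 = 1) hne
    apply hnz
    intro x hx
    have := hmult x hx 1 h1J (by rw [mul_one]; exact hx)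
    rw [mul_one] at this
    rw [this, h10, mul_zero]
  obtain ⟨ε, hε, hball⟩ := Metric.isOpen_iff.1 isOpen_interior 1 h1I
  obtain ⟨δ, hδ, hδprop⟩ := Metric.continuousAt_iff.1 Real.continuous_exp.continuousAt ε hε
  have hexpI : ∀ t : ℝ, |t| < δ → Real.exp t ∈ I := by
    intro t ht
    have h1 := hδprop (x := t) (by rw [Real.dist_eq, sub_zero]; exact ht)
    rw [Real.dist_eq, Real.exp_zero] at h1
    exact interior_subset (hball (by rw [Metric.mem_ball, Real.dist_eq]; exact h1))
  have hpos : ∀ t : ℝ, |t| < δ → 0 < K (Real.exp t) := by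
    intro t ht
    have hab := abs_nonneg t
    have ht2 : |t/2| < δ := by
      rw [abs_div, abs_two]; linarith
    have hmem : Real.exp (t/2) ∈ J := hIJ (hexpI _ ht2)
    have hmem' : Real.exp (-(t/2)) ∈ J := hIJ (hexpI _ (by rwa [abs_neg]))
    have hprod : Real.exp (t/2) * Real.exp (-(t/2)) = 1 := by
      rw [← Real.exp_add]; simp
    have h1 : K (Real.exp (t/2)) * K (Real.exp (-(t/2))) = 1 := by
      rw [← hmult _ hmem _ hmem' (by rw [hprod]; exact h1J), hprod, hK1]
    have hne : K (Real.exp (t/2)) ≠ 0 := left_ne_zero_of_mul_eq_one h1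
    have hp : Real.exp (t/2) * Real.exp (t/2) = Real.exp t := by
      rw [← Real.exp_add]; ring_nf
    have h2 : K (Real.exp t) = K (Real.exp (t/2)) * K (Real.exp (t/2)) := by
      rw [← hp]
      exact hmult _ hmem _ hmem (by rw [hp]; exact hIJ (hexpI t ht))
    rw [h2]
    exact mul_self_pos.2 hne
  have hImeas : MeasurableSet I := hIconv.ordConnected.measurableSet
  have hKtm : Measurable (fun x : ℝ => if hx : x ∈ I then I.restrict K ⟨x, hx⟩ else 0) :=
    Measurable.dite hmeas measurable_const hImeas
  set Kt : ℝ → ℝ := fun x => if hx : x ∈ I then I.restrict K ⟨x, hx⟩ else 0 with hKtdef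
  set g : ℝ → ℝ := fun t => Real.log (Kt (Real.exp t)) with hg
  have hgm : Measurable g := Real.measurable_log.comp (hKtm.comp Real.continuous_exp.measurable)
  have hgval : ∀ t : ℝ, |t| < δ → Kt (Real.exp t) = K (Real.exp t) := by
    intro t ht
    simp only [hKtdef]
    rw [dif_pos (hexpI t ht)]
    rfl
  have hgadd : ∀ s t : ℝ, |s| < δ → |t| < δ → |s+t| < δ → g (s+t) = g s + g t := by
    intro s t hs ht hst
    simp only [hg]
    rw [hgval _ hst, hgval _ hs, hgval _ ht, Real.exp_add]
    rw [hmult _ (hIJ (hexpI s hs)) _ (hIJ (hexpI t ht))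
      (by rw [← Real.exp_add]; exact hIJ (hexpI _ hst))]
    exact Real.log_mul (ne_of_gt (hpos s hs)) (ne_of_gt (hpos t ht))
  obtain ⟨α, hα⟩ := localAdd_linear g hgm δ hδ hgadd
  have hP : ∀ t : ℝ, |t| < δ → K (Real.exp t) = Real.exp (α * t) := by
    intro t ht
    have h1 := hα t ht
    simp only [hg] at h1
    rw [hgval t ht] at h1
    rw [← h1, Real.exp_log (hpos t ht)]
  have hJord : J.OrdConnected := hJconv.ordConnected
  have key : ∀ x ∈ J, ∀ q : ℝ, 0 < q → x * q ∈ J → K (x * q) = K x * q ^ α := by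
    intro x hxJ q hq hxqJ
    set L := Real.log q with hL
    have hqL : Real.exp L = q := Real.exp_log hq
    obtain ⟨n, hn⟩ := exists_nat_gt (|L| / δ)
    have hn0 : (0:ℝ) < n := lt_of_le_of_lt (div_nonneg (abs_nonneg L) hδ.le) hn
    set u := L / n with hu'
    have hu : |u| < δ := by
      rw [hu', abs_div, abs_of_pos hn0, div_lt_iff₀ hn0, mul_comm]
      exact (div_lt_iff₀ hδ).1 hn
    have hmemk : ∀ k : ℕ, k ≤ n → x * Real.exp (k * u) ∈ J := by
      intro k hk
      have hknn : (0:ℝ) ≤ (k:ℝ)/(n:ℝ) := by positivity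
      have hkn1 : (k:ℝ)/(n:ℝ) ≤ 1 := by
        rw [div_le_one hn0]; exact_mod_cast hk
      have hku : (k:ℝ) * u = ((k:ℝ)/(n:ℝ)) * L := by rw [hu']; ring
      have hbet : Real.exp ((k:ℝ)*u) ∈ Set.uIcc 1 q := by
        rw [hku, Set.mem_uIcc]
        rcases le_or_gt 0 L with hL0 | hL0
        · left
          constructor
          · calc (1:ℝ) = Real.exp 0 := Real.exp_zero.symm
              _ ≤ Real.exp ((k/n:ℝ)*L) := Real.exp_le_exp.2 (by positivity)
          · rw [← hqL]; exact Real.exp_le_exp.2 (by nlinarith)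
        · right
          constructor
          · rw [← hqL]; exact Real.exp_le_exp.2 (by nlinarith)
          · calc Real.exp ((k/n:ℝ)*L) ≤ Real.exp 0 := Real.exp_le_exp.2 (by nlinarith)
              _ = 1 := Real.exp_zero
      have hx' : x * Real.exp ((k:ℝ)*u) ∈ Set.uIcc x (x*q) := by
        have he := Real.exp_pos ((k:ℝ)*u)
        rcases Set.mem_uIcc.1 hbet with ⟨hb1, hb2⟩ | ⟨hb1, hb2⟩ <;>
          rcases le_or_gt 0 x with hx0 | hx0 <;> rw [Set.mem_uIcc]
        · exact Or.inl ⟨by nlinarith, by nlinarith⟩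
        · exact Or.inr ⟨by nlinarith, by nlinarith⟩
        · exact Or.inr ⟨by nlinarith, by nlinarith⟩
        · exact Or.inl ⟨by nlinarith, by nlinarith⟩
      exact hJord.uIcc_subset hxJ hxqJ hx'
    have hKk : ∀ k : ℕ, k ≤ n → K (x * Real.exp (k*u)) = K x * Real.exp (α * (k*u)) := by
      intro k hk
      induction k with
      | zero => norm_num
      | succ k ih =>
        have hk' : k ≤ n := Nat.le_of_succ_le hk
        have e1 : ((k+1:ℕ):ℝ) * u = (k:ℝ)*u + u := by push_cast; ring
        have e2 : x * Real.exp (((k+1:ℕ):ℝ)*u) = (x * Real.exp ((k:ℝ)*u)) * Real.exp u := by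
          rw [e1, Real.exp_add]; ring
        rw [e2, hmult _ (hmemk k hk') _ (hIJ (hexpI u hu))
          (by rw [← e2]; exact hmemk (k+1) hk), ih hk', hP u hu, e1, mul_add α, Real.exp_add]
        ring
    have hfin := hKk n le_rfl
    have hnu : (n:ℝ) * u = L := by rw [hu']; field_simp
    rw [hnu, hqL] at hfin
    rw [hfin]
    congr 1
    rw [Real.rpow_def_of_pos hq]
    congr 1
    rw [← hL]
    ring
  have hKpos : ∀ x ∈ J, 0 < x → K x = x ^ α := by
    intro x hx hx0
    have h1 := key 1 h1J x hx0 (by rwa [one_mul])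
    rwa [one_mul, hK1, one_mul] at h1
  by_cases h0case : 0 ∈ J ∧ K 0 = 1
  · left
    intro x hx
    have h1 := hmult 0 h0case.1 x hx (by rw [zero_mul]; exact h0case.1)
    rw [zero_mul, h0case.2, one_mul] at h1
    exact h1.symm
  · right
    have hK00 : 0 ∈ J → K 0 = 0 := by
      intro h0J
      have hsq : K 0 = K 0 * K 0 := by
        have := hmult 0 h0J 0 h0J (by rw [mul_zero]; exact h0J)
        rwa [mul_zero] at this
      have hfac : K 0 * (1 - K 0) = 0 := by nlinarith
      rcases mul_eq_zero.1 hfac with h | h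
      · exact h
      · exact absurd ⟨h0J, by linarith⟩ h0case
    by_cases hneg : ∃ s ∈ J, s < 0
    · obtain ⟨s, hsJ, hs0⟩ := hneg
      set u0 : ℝ := max s (-1/2) with hu0
      have hu0neg : u0 < 0 := max_lt hs0 (by norm_num)
      have hu0ne : u0 ≠ 0 := ne_of_lt hu0neg
      have hu0ge : -1/2 ≤ u0 := le_max_right _ _
      have hu0J : u0 ∈ J := by
        apply hJord.uIcc_subset hsJ h1J
        rw [Set.mem_uIcc]
        left
        exact ⟨le_max_left _ _, by linarith⟩
      have hu0sqJ : u0^2 ∈ J := by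
        apply hJord.uIcc_subset hsJ h1J
        rw [Set.mem_uIcc]
        left
        constructor
        · nlinarith
        · nlinarith
      have hsq : K u0 * K u0 = (u0^2) ^ α := by
        have h1 := hmult u0 hu0J u0 hu0J (by rw [← sq]; exact hu0sqJ)
        rw [show u0 * u0 = u0^2 from (sq u0).symm] at h1
        rw [← h1]
        exact hKpos _ hu0sqJ (by positivity)
      have habs : (u0^2) ^ α = |u0| ^ α * |u0| ^ α := by
        rw [show u0^2 = |u0| * |u0| by rw [abs_mul_abs_self]; ring,
          Real.mul_rpow (abs_nonneg _) (abs_nonneg _)]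
      have habspos : (0:ℝ) < |u0| ^ α := Real.rpow_pos_of_pos (abs_pos.2 hu0ne) α
      set c : ℝ := K u0 / |u0| ^ α with hc
      have hcsq : c * c = 1 := by
        rw [hc, div_mul_div_comm, hsq, habs, div_self (ne_of_gt (mul_pos habspos habspos))]
      have hKneg : ∀ x ∈ J, x < 0 → K x = c * |x| ^ α := by
        intro x hxJ hx0
        have hq : 0 < x / u0 := div_pos_of_neg_of_neg hx0 hu0neg
        have hmul : u0 * (x/u0) = x := by field_simp
        have h1 := key u0 hu0J (x / u0) hq (by rw [hmul]; exact hxJ)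
        rw [hmul] at h1
        have habs2 : |x| = |u0| * (x/u0) := by
          rw [abs_of_neg hx0, abs_of_neg hu0neg]; field_simp
        rw [h1, hc, habs2, Real.mul_rpow (abs_nonneg _) hq.le]
        field_simp
      have hc1 : c = 1 ∨ c = -1 := by
        have hfac : (c - 1) * (c + 1) = 0 := by nlinarith
        rcases mul_eq_zero.1 hfac with h | h
        · left; linarith
        · right; linarith
      refine ⟨α, ?_⟩
      rcases hc1 with hc1 | hc1
      · left
        intro x hx
        rcases lt_trichotomy x 0 with hlt | heq | hgt
        · rw [hKneg x hx hlt, hc1, one_mul]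
          simp [phi, ne_of_lt hlt]
        · subst heq
          simp [phi, hK00 hx]
        · rw [hKpos x hx hgt]
          simp [phi, ne_of_gt hgt, abs_of_pos hgt]
      · right
        intro x hx
        rcases lt_trichotomy x 0 with hlt | heq | hgt
        · rw [hKneg x hx hlt, hc1]
          simp [psi, ne_of_lt hlt, Real.sign_of_neg hlt]
        · subst heq
          simp [psi, hK00 hx]
        · rw [hKpos x hx hgt]
          simp [psi, ne_of_gt hgt, Real.sign_of_pos hgt, abs_of_pos hgt]
    · push_neg at hneg
      refine ⟨α, Or.inl ?_⟩
      intro x hx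
      rcases lt_trichotomy x 0 with hlt | heq | hgt
      · exact absurd hlt (not_lt.2 (hneg x hx))
      · subst heq
        simp [phi, hK00 hx]
      · rw [hKpos x hx hgt]
        simp [phi, ne_of_gt hgt, abs_of_pos hgt]
end

section
/- Let n ≥ 3 and J = ℝ. If K : ℝ → ℝ is such that K[A] := (K(a_{ij})) is positive semidefinite of rank at most 1 for every n×n real positive semidefinite matrix A of rank at most 1, and K is not identically zero, then K(1) ≠ 0 and K/K(1) is multiplicative on ℝ: K(xy)K(1) = K(x)K(y) for all x, y ∈ ℝ. -/
open Matrix in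
private lemma rank_le_one_minor {n : ℕ} (M : Matrix (Fin n) (Fin n) ℝ) (h : M.rank ≤ 1)
    (i j k l : Fin n) : M i k * M j l = M i l * M j k := by
  by_contra hne
  set u : Fin n → ℝ := fun r => M r k with hu_def
  set v : Fin n → ℝ := fun r => M r l with hv_def
  have hu : u ∈ LinearMap.range M.mulVecLin :=
    ⟨Pi.single k 1, by funext r; simp [Matrix.mulVecLin_apply, hu_def]⟩
  have hv : v ∈ LinearMap.range M.mulVecLin :=
    ⟨Pi.single l 1, by funext r; simp [Matrix.mulVecLin_apply, hv_def]⟩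
  have hd : u i * v j - u j * v i ≠ 0 := by
    intro hc
    exact hne (by simp only [hu_def, hv_def] at hc ⊢; linear_combination hc)
  have hind : LinearIndependent ℝ
      ![(⟨u, hu⟩ : LinearMap.range M.mulVecLin), ⟨v, hv⟩] := by
    rw [LinearIndependent.pair_iff]
    intro s t hst
    have hst' : s • u + t • v = 0 := by
      have := congrArg Subtype.val hst
      simpa using this
    have h1 : s * u i + t * v i = 0 := congrFun hst' i
    have h2 : s * u j + t * v j = 0 := congrFun hst' j
    have hs : s * (u i * v j - u j * v i) = 0 := by linear_combination v j * h1 - v i * h2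
    have ht : t * (u i * v j - u j * v i) = 0 := by linear_combination u i * h2 - u j * h1
    exact ⟨(mul_eq_zero.mp hs).resolve_right hd, (mul_eq_zero.mp ht).resolve_right hd⟩
  have h2 : 2 ≤ Module.finrank ℝ (LinearMap.range M.mulVecLin) := by
    simpa using hind.fintype_card_le_finrank
  have hr : M.rank = Module.finrank ℝ (LinearMap.range M.mulVecLin) := rfl
  omega

open Matrix in
private lemma vecMulVec_mulVec' {n : ℕ} (v x : Fin n → ℝ) :
    (Matrix.vecMulVec v v).mulVec x = (v ⬝ᵥ x) • v := by
  funext i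
  simp [Matrix.mulVec, Matrix.vecMulVec_apply, dotProduct, Finset.sum_mul,
    Finset.mul_sum, mul_comm, mul_left_comm]

open Matrix in
private lemma vecMulVec_rank_le_one {n : ℕ} (v : Fin n → ℝ) :
    (Matrix.vecMulVec v v).rank ≤ 1 := by
  rw [Matrix.rank]
  have hle : LinearMap.range (Matrix.vecMulVec v v).mulVecLin ≤ Submodule.span ℝ {v} := by
    rintro _ ⟨x, rfl⟩
    have : (Matrix.vecMulVec v v).mulVecLin x = (v ⬝ᵥ x) • v := vecMulVec_mulVec' v x
    rw [this]
    exact Submodule.smul_mem _ _ (Submodule.mem_span_singleton_self v)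
  calc Module.finrank ℝ (LinearMap.range (Matrix.vecMulVec v v).mulVecLin)
      ≤ Module.finrank ℝ (Submodule.span ℝ ({v} : Set (Fin n → ℝ))) :=
        Submodule.finrank_mono hle
    _ ≤ 1 := by simpa using finrank_span_le_card ({v} : Set (Fin n → ℝ))

open Matrix in
private lemma vecMulVec_posSemidef {n : ℕ} (v : Fin n → ℝ) :
    (Matrix.vecMulVec v v).PosSemidef := by
  refine Matrix.PosSemidef.of_dotProduct_mulVec_nonneg ?_ ?_
  · ext i j
    simp [Matrix.conjTranspose_apply, Matrix.vecMulVec_apply, mul_comm]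
  · intro x
    rw [vecMulVec_mulVec']
    have : star x ⬝ᵥ ((v ⬝ᵥ x) • v) = (v ⬝ᵥ x) * (v ⬝ᵥ x) := by
      rw [dotProduct_smul]
      simp [dotProduct_comm, smul_eq_mul]
    rw [this]
    exact mul_self_nonneg _

theorem rank_one_preserver_multiplicative
    (n : ℕ) (hn : 3 ≤ n) (K : ℝ → ℝ)
    (hK : ∀ A : Matrix (Fin n) (Fin n) ℝ, A.PosSemidef → A.rank ≤ 1 →
      (A.map K).PosSemidef ∧ (A.map K).rank ≤ 1)
    (hnz : ¬ (∀ x : ℝ, K x = 0)) :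
    K 1 ≠ 0 ∧ ∀ x y : ℝ, K (x * y) * K 1 = K x * K y := by
  set i0 : Fin n := ⟨0, by omega⟩ with hi0
  set i1 : Fin n := ⟨1, by omega⟩ with hi1
  set i2 : Fin n := ⟨2, by omega⟩ with hi2
  have h01 : i0 ≠ i1 := by simp [hi0, hi1, Fin.ext_iff]
  have h02 : i0 ≠ i2 := by simp [hi0, hi2, Fin.ext_iff]
  have h12 : i1 ≠ i2 := by simp [hi1, hi2, Fin.ext_iff]
  have key : ∀ x y : ℝ, (K (x * y) * K 1 = K x * K y) ∧
      (K (x * x) * K 1 = K x * K x) := by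
    intro x y
    set v : Fin n → ℝ := fun r => if r = i0 then x else if r = i1 then y else
      if r = i2 then 1 else 0 with hv
    set A : Matrix (Fin n) (Fin n) ℝ := Matrix.vecMulVec v v with hA
    have hrank := (hK A (vecMulVec_posSemidef v) (vecMulVec_rank_le_one v)).2
    have m1 := rank_le_one_minor (A.map K) hrank i0 i2 i1 i2
    have m2 := rank_le_one_minor (A.map K) hrank i0 i2 i0 i2
    simp only [Matrix.map_apply, hA, Matrix.vecMulVec_apply, hv] at m1 m2
    simp only [if_pos rfl, eq_self_iff_true, if_true, if_neg h01, if_neg h02, if_neg h12,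
      if_neg (Ne.symm h01), if_neg (Ne.symm h02), if_neg (Ne.symm h12),
      one_mul, mul_one] at m1 m2
    exact ⟨m1, m2⟩
  have hK1 : K 1 ≠ 0 := by
    intro h1
    apply hnz
    intro x
    have hx := (key x 0).2
    rw [h1, mul_zero] at hx
    exact mul_self_eq_zero.mp hx.symm
  exact ⟨hK1, fun x y => (key x y).1⟩
end

section
/- Let n ≥ 3, let J ⊆ ℝ be an interval with 1 an interior point, J ∩ (0,∞) open, and ±sup J ∉ J, and let K : J → ℝ map every matrix in ℙₙ¹(J) entrywise into ℙₙ¹(ℝ). If K(1) = 0, then K ≡ 0 on J. -/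
open Matrix in
lemma psd_offdiag_zero' {n : ℕ} (M : Matrix (Fin n) (Fin n) ℝ) (hM : M.PosSemidef)
    (i j : Fin n) (hii : M i i = 0) : M i j = 0 := by
  by_cases hij : i = j
  · subst hij; exact hii
  have hsym : M j i = M i j := by simpa using hM.1.apply i j
  by_contra hne
  set t : ℝ := -(M j j + 1) / (2 * M i j) with ht
  have h := hM.dotProduct_mulVec_nonneg (Pi.single i t + Pi.single j 1)
  rw [star_trivial] at h
  rw [Matrix.mulVec_add, Matrix.mulVec_single, Matrix.mulVec_single, add_dotProduct,
    single_dotProduct, single_dotProduct] at h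
  simp only [Pi.add_apply, Pi.smul_apply, Matrix.col_apply, op_smul_eq_mul, hii, hsym] at h
  have htm : t * M i j = -(M j j + 1) / 2 := by
    rw [ht]; field_simp
  nlinarith [h]

open Matrix in
lemma vecMulVec_psd_rank' {n : ℕ} (v : Fin n → ℝ) :
    (Matrix.vecMulVec v v).PosSemidef ∧ (Matrix.vecMulVec v v).rank ≤ 1 := by
  have h : Matrix.vecMulVec v v = (Matrix.replicateRow Unit v)ᴴ * (Matrix.replicateRow Unit v) := by
    rw [Matrix.vecMulVec_eq Unit]; congr 1
  constructor
  · rw [h]; exact Matrix.posSemidef_conjTranspose_mul_self _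
  · rw [h]
    refine le_trans (Matrix.rank_mul_le_left _ _) ?_
    simpa using Matrix.rank_le_card_width ((Matrix.replicateRow Unit v)ᴴ)

theorem rank_one_preserver_vanishing_at_one
    (n : ℕ) (hn : 3 ≤ n)
    (J : Set ℝ) (hJconv : Convex ℝ J) (h1J : (1 : ℝ) ∈ interior J)
    (hJopen : IsOpen (J ∩ Set.Ioi (0 : ℝ)))
    (hsup : sSup J ∉ J ∧ -sSup J ∉ J)
    (K : ℝ → ℝ)
    (hK : ∀ A : Matrix (Fin n) (Fin n) ℝ, A.PosSemidef → A.rank ≤ 1 →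
      (∀ i j, A i j ∈ J) → (A.map K).PosSemidef ∧ (A.map K).rank ≤ 1)
    (hK1 : K 1 = 0) :
    ∀ x ∈ J, K x = 0 := by
  have h1 : (1 : ℝ) ∈ J := interior_subset h1J
  have hOC : J.OrdConnected := hJconv.ordConnected
  -- the key matrix step
  have key : ∀ u p w : ℝ, u ∈ J → p ∈ J → w ∈ J → 0 < u → p ^ 2 = u * w → K u = 0 →
      K p = 0 := by
    intro u p w hu hp hw hu0 hpw hKu
    set s := Real.sqrt u with hs
    have hs0 : 0 < s := Real.sqrt_pos.mpr hu0
    have hss : s * s = u := Real.mul_self_sqrt hu0.le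
    set i0 : Fin n := ⟨0, by omega⟩ with hi0
    set i1 : Fin n := ⟨1, by omega⟩ with hi1
    have h10 : i1 ≠ i0 := by simp [hi0, hi1, Fin.ext_iff]
    set v : Fin n → ℝ := fun i => if i = i0 then p / s else s with hv
    obtain ⟨hApsd, hArank⟩ := vecMulVec_psd_rank' v
    have hentries : ∀ i j, Matrix.vecMulVec v v i j ∈ J := by
      intro i j
      rw [Matrix.vecMulVec_apply]
      by_cases hi : i = i0 <;> by_cases hj : j = i0 <;> simp only [hv, hi, hj, if_pos, if_neg,
        ite_true, ite_false]
      · have : p / s * (p / s) = w := by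
          rw [div_mul_div_comm, hss, ← sq, hpw]
          exact mul_div_cancel_left₀ w hu0.ne'
        rwa [this]
      · have : p / s * s = p := div_mul_cancel₀ p hs0.ne'
        rwa [this]
      · have : s * (p / s) = p := by rw [mul_comm]; exact div_mul_cancel₀ p hs0.ne'
        rwa [this]
      · rwa [hss]
    obtain ⟨hPSD, -⟩ := hK _ hApsd hArank hentries
    have h11 : (Matrix.vecMulVec v v).map K i1 i1 = 0 := by
      simp only [Matrix.map_apply, Matrix.vecMulVec_apply, hv, if_neg h10, hss]
      exact hKu
    have h0 := psd_offdiag_zero' _ hPSD i1 i0 h11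
    simp only [Matrix.map_apply, Matrix.vecMulVec_apply, hv, if_neg h10, eq_self_iff_true, if_true] at h0
    rwa [mul_comm, div_mul_cancel₀ p hs0.ne'] at h0
  -- positive case
  have hpos : ∀ x, x ∈ J → 0 < x → K x = 0 := by
    intro x hxJ hx0
    have hx' : x ∈ J ∩ Set.Ioi 0 := ⟨hxJ, hx0⟩
    have htend : Filter.Tendsto (fun k : ℕ => x ^ (1 + (1 / 2 ^ k : ℝ)))
        Filter.atTop (nhds x) := by
      have he : Filter.Tendsto (fun k : ℕ => 1 + (1 / 2 ^ k : ℝ)) Filter.atTop (nhds 1) := by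
        have h2 : Filter.Tendsto (fun k : ℕ => ((1 : ℝ) / 2) ^ k) Filter.atTop (nhds 0) :=
          tendsto_pow_atTop_nhds_zero_of_lt_one (by norm_num) (by norm_num)
        have h3 := (tendsto_const_nhds (x := (1:ℝ)) (f := Filter.atTop (α := ℕ))).add h2
        simpa [div_pow] using h3
      have hc : ContinuousAt (fun t : ℝ => x ^ t) 1 :=
        Real.continuousAt_const_rpow hx0.ne'
      have := hc.tendsto.comp he
      simpa [Real.rpow_one, Function.comp_def] using this
    obtain ⟨k, hk⟩ := (htend.eventually_mem (hJopen.mem_nhds hx')).exists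
    set c : ℝ := x ^ ((1 : ℝ) / 2 ^ k) with hc
    have h2k : (0 : ℝ) < 2 ^ k := by positivity
    have hcpow : ∀ m : ℕ, c ^ m = x ^ ((m : ℝ) / 2 ^ k) := by
      intro m
      rw [hc, ← Real.rpow_natCast (x ^ ((1 : ℝ) / 2 ^ k)) m, ← Real.rpow_mul hx0.le]
      congr 1
      field_simp
    have hmem : ∀ m : ℕ, m ≤ 2 ^ k → c ^ m ∈ J := by
      intro m hm
      rw [hcpow]
      have ht0 : 0 ≤ (m : ℝ) / 2 ^ k := by positivity
      have ht1 : (m : ℝ) / 2 ^ k ≤ 1 := by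
        rw [div_le_one h2k]
        have : (m : ℝ) ≤ ((2 ^ k : ℕ) : ℝ) := Nat.cast_le.mpr hm
        simpa using this
      rcases le_total 1 x with hx1 | hx1
      · refine hOC.out h1 hxJ ⟨?_, ?_⟩
        · have := Real.rpow_le_rpow_of_exponent_le hx1 ht0
          simpa using this
        · have := Real.rpow_le_rpow_of_exponent_le hx1 ht1
          simpa using this
      · refine hOC.out hxJ h1 ⟨?_, ?_⟩
        · have := Real.rpow_le_rpow_of_exponent_ge hx0 hx1 ht1
          simpa using this
        · have := Real.rpow_le_rpow_of_exponent_ge hx0 hx1 ht0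
          simpa using this
    have htop : c ^ (2 ^ k + 1) ∈ J := by
      rw [hcpow]
      have : ((2 ^ k + 1 : ℕ) : ℝ) / 2 ^ k = 1 + 1 / 2 ^ k := by
        push_cast
        field_simp
      rw [this]
      exact hk.1
    have hcpos : 0 < c := Real.rpow_pos_of_pos hx0 _
    have main : ∀ m : ℕ, m ≤ 2 ^ k → K (c ^ m) = 0 := by
      intro m
      induction m with
      | zero => intro _; simpa using hK1
      | succ m ih =>
        intro hm1
        have hm : m ≤ 2 ^ k := by omega
        have hw : c ^ (m + 2) ∈ J := by
          by_cases h : m + 2 ≤ 2 ^ k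
          · exact hmem _ h
          · have : m + 2 = 2 ^ k + 1 := by omega
            rw [this]; exact htop
        exact key (c ^ m) (c ^ (m + 1)) (c ^ (m + 2)) (hmem m hm) (hmem (m + 1) hm1) hw
          (pow_pos hcpos m) (by ring) (ih hm)
    have hfin := main (2 ^ k) le_rfl
    rw [hcpow] at hfin
    have : ((2 ^ k : ℕ) : ℝ) / 2 ^ k = 1 := by
      push_cast
      field_simp
    rwa [this, Real.rpow_one] at hfin
  intro x hx
  rcases lt_trichotomy x 0 with hneg | hzero | hposx
  · have h0J : (0 : ℝ) ∈ J := hOC.out hx h1 ⟨hneg.le, zero_le_one⟩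
    by_cases hge : -1 ≤ x
    · have hx2 : x ^ 2 ∈ J := hOC.out h0J h1 ⟨sq_nonneg x, by nlinarith⟩
      exact key 1 x (x ^ 2) h1 hx hx2 one_pos (by ring) hK1
    · push_neg at hge
      have hbdd : BddAbove J := by
        by_contra hb
        rw [Real.sSup_of_not_bddAbove hb] at hsup
        exact hsup.2 (by simpa using h0J)
      have hs1 : 1 ≤ sSup J := le_csSup hbdd h1
      have hxs : -sSup J < x := by
        by_contra hcon
        push_neg at hcon
        exact hsup.2 (hOC.out hx h1 ⟨hcon, by linarith⟩)
      obtain ⟨z, hzJ, hz2⟩ := exists_lt_of_lt_csSup ⟨1, h1⟩ (by linarith : -x < sSup J)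
      have hmx : -x ∈ J := hOC.out h1 hzJ ⟨by linarith, hz2.le⟩
      exact key (-x) x (-x) hmx hx hmx (by linarith) (by ring)
        (hpos _ hmx (by linarith))
  · subst hzero
    exact key 1 0 0 h1 hx hx one_pos (by ring) hK1
  · exact hpos x hx hposx
end

section
/- If K : ℝ → ℝ is such that K[A] is positive semidefinite of rank at most 1 for every 2×2 real positive semidefinite rank-at-most-1 matrix A, K is Lebesgue measurable on a neighborhood of 1, and K is not identically zero, then the restriction of K to [0,∞) is either a positive constant, or a positive multiple of x ↦ x^α (with K(0) = 0) for some α ∈ ℝ. -/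
open MeasureTheory Matrix Pointwise

private lemma rank_one_master (K : ℝ → ℝ)
    (hK : ∀ A : Matrix (Fin 2) (Fin 2) ℝ, A.PosSemidef → A.rank ≤ 1 →
      (A.map K).PosSemidef ∧ (A.map K).rank ≤ 1)
    (s t : ℝ) : K (s*s) * K (t*t) = K (s*t) * K (s*t) ∧ 0 ≤ K (s*s) := by
  set v : Fin 2 → ℝ := ![s, t] with hv
  set A : Matrix (Fin 2) (Fin 2) ℝ := Matrix.of fun i j => v i * v j with hA
  have hpsd : A.PosSemidef := by
    refine Matrix.PosSemidef.of_dotProduct_mulVec_nonneg ?_ ?_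
    · ext i j
      simp [hA, Matrix.conjTranspose_apply, mul_comm]
    · intro x
      have : star x ⬝ᵥ A *ᵥ x = (v 0 * x 0 + v 1 * x 1) ^ 2 := by
        simp [hA, dotProduct, Matrix.mulVec, Fin.sum_univ_two]
        ring
      rw [this]
      positivity
  have hrank : A.rank ≤ 1 := by
    have : A = (Matrix.of fun i (_ : Fin 1) => v i) * (Matrix.of fun (_ : Fin 1) j => v j) := by
      ext i j
      simp [hA, Matrix.mul_apply]
    rw [this]
    exact le_trans (Matrix.rank_mul_le_left _ _) (le_trans (Matrix.rank_le_card_width _) (by simp))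
  obtain ⟨hpsd', hrank'⟩ := hK A hpsd hrank
  constructor
  · have hdet : (A.map K).det = 0 := by
      by_contra hne
      have : (A.map K).rank = 2 := by
        simpa using Matrix.rank_of_isUnit _ ((Matrix.isUnit_iff_isUnit_det _).2 (isUnit_iff_ne_zero.2 hne))
      omega
    rw [Matrix.det_fin_two] at hdet
    have e0 : (A.map K) 0 0 = K (s*s) := by simp [hA, hv]
    have e1 : (A.map K) 1 1 = K (t*t) := by simp [hA, hv]
    have e2 : (A.map K) 0 1 = K (s*t) := by simp [hA, hv]
    have e3 : (A.map K) 1 0 = K (s*t) := by simp [hA, hv, mul_comm]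
    rw [e0, e1, e2, e3] at hdet
    linarith
  · have := hpsd'.dotProduct_mulVec_nonneg (Pi.single (0 : Fin 2) (1 : ℝ))
    simpa [hA, hv, dotProduct, Matrix.mulVec, Fin.sum_univ_two, Pi.single] using this

private lemma additive_measurable_linear (h : ℝ → ℝ) (hadd : ∀ a b, h (a + b) = h a + h b)
    (g : ℝ → ℝ) (hg : Measurable g) (V : Set ℝ) (hV : V ∈ nhds 0)
    (hagree : ∀ t ∈ V, h t = g t) :
    ∀ t : ℝ, h t = h 1 * t := by
  set H : ℝ →+ ℝ := AddMonoidHom.mk' h hadd with hH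
  obtain ⟨ε, hε, hball⟩ := Metric.mem_nhds_iff.1 hV
  set Aset : ℕ → Set ℝ := fun n => Metric.ball (0:ℝ) ε ∩ {t | |g t| ≤ n} with hAset
  have hAmeas : ∀ n, MeasurableSet (Aset n) :=
    fun n => measurableSet_ball.inter ((hg.norm) measurableSet_Iic)
  have hcover : Metric.ball (0:ℝ) ε ⊆ ⋃ n, Aset n := by
    intro x hx
    obtain ⟨n, hn⟩ := exists_nat_ge (|g x|)
    exact Set.mem_iUnion.2 ⟨n, hx, hn⟩
  obtain ⟨n, hn⟩ : ∃ n, 0 < volume (Aset n) := by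
    by_contra hc
    push_neg at hc
    simp only [le_zero_iff] at hc
    have : volume (⋃ n, Aset n) = 0 := measure_iUnion_null hc
    have hb : volume (Metric.ball (0:ℝ) ε) = 0 := measure_mono_null hcover this
    rw [Real.volume_ball] at hb
    simp at hb
    linarith
  have hst : Aset n - Aset n ∈ nhds (0:ℝ) :=
    MeasureTheory.Measure.sub_mem_nhds_zero_of_addHaar_pos volume (Aset n) (hAmeas n) hn
  have hbound : ∀ z ∈ Aset n - Aset n, |h z| ≤ 2 * n := by
    rintro z ⟨a, ha, b, hb, rfl⟩
    have hea : h a = g a := hagree a (hball ha.1)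
    have heb : h b = g b := hagree b (hball hb.1)
    have : h (a - b) = h a - h b := map_sub H a b
    rw [this, hea, heb]
    have := ha.2
    have := hb.2
    simp only [Set.mem_setOf_eq] at *
    calc |g a - g b| ≤ |g a| + |g b| := abs_sub _ _
      _ ≤ 2 * n := by linarith
  obtain ⟨δ, hδ, hδball⟩ := Metric.mem_nhds_iff.1 hst
  have hcont0 : Filter.Tendsto h (nhds 0) (nhds 0) := by
    rw [Metric.tendsto_nhds_nhds]
    intro e he
    obtain ⟨k, hk⟩ := exists_nat_gt (2 * n / e)
    have hk0 : 0 < (k : ℝ) := lt_of_le_of_lt (by positivity) hk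
    refine ⟨δ / k, by positivity, ?_⟩
    intro x hx
    simp only [Real.dist_eq, sub_zero] at hx ⊢
    have hkx : |(k : ℝ) * x| < δ := by
      rw [abs_mul, abs_of_pos hk0]
      calc (k:ℝ) * |x| < k * (δ / k) := by
            exact mul_lt_mul_of_pos_left hx hk0
        _ = δ := by field_simp
    have hmem : ((k:ℝ) * x) ∈ Aset n - Aset n :=
      hδball (Metric.mem_ball.mpr (by rw [Real.dist_eq, sub_zero]; exact hkx))
    have hnk : h ((k:ℝ) * x) = k * h x := by
      have := map_nsmul H k x
      simpa [nsmul_eq_mul, H] using this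
    have := hbound _ hmem
    rw [hnk, abs_mul, abs_of_pos hk0] at this
    have : |h x| ≤ 2 * n / k := by
      rw [le_div_iff₀ hk0]
      linarith
    calc |h x| ≤ 2 * n / k := this
      _ < e := by
        rw [div_lt_iff₀ hk0]
        have : (2:ℝ) * n = (2 * n / e) * e := by field_simp
        nlinarith
  have hcont : Continuous h := by
    rw [continuous_iff_continuousAt]
    intro x
    have h0 : h 0 = 0 := by
      have := hadd 0 0; simp at this; linarith
    have key : ∀ y, h y = h x + h (y - x) := by
      intro y
      have := hadd x (y - x)
      have e : x + (y - x) = y := by ring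
      rw [e] at this
      exact this
    have hsub : Filter.Tendsto (fun y : ℝ => y - x) (nhds x) (nhds 0) := by
      have : Continuous (fun y : ℝ => y - x) := continuous_id.sub continuous_const
      simpa using this.tendsto x
    have htt : Filter.Tendsto (fun y => h x + h (y - x)) (nhds x) (nhds (h x + 0)) :=
      Filter.Tendsto.const_add _ (hcont0.comp hsub)
    have := htt.congr (fun y => (key y).symm)
    rw [ContinuousAt]
    simpa using this
  intro t
  have := map_real_smul H hcont t 1
  simpa [mul_comm, H] using this

theorem rank_one_preserver_two_by_two
    (K : ℝ → ℝ)
    (hK : ∀ A : Matrix (Fin 2) (Fin 2) ℝ, A.PosSemidef → A.rank ≤ 1 →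
      (A.map K).PosSemidef ∧ (A.map K).rank ≤ 1)
    (U : Set ℝ) (hU : U ∈ nhds (1 : ℝ))
    (hmeas : Measurable (U.restrict K))
    (hnz : ¬ (∀ x : ℝ, K x = 0)) :
    (∃ c : ℝ, 0 < c ∧ ∀ x : ℝ, 0 ≤ x → K x = c) ∨
      ∃ c : ℝ, 0 < c ∧ ∃ α : ℝ, K 0 = 0 ∧ ∀ x : ℝ, 0 < x → K x = c * x ^ α := by
  have E : ∀ s t : ℝ, K (s*s) * K (t*t) = K (s*t) * K (s*t) :=
    fun s t => (rank_one_master K hK s t).1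
  have Knn : ∀ x : ℝ, 0 ≤ x → 0 ≤ K x := by
    intro x hx
    have := (rank_one_master K hK (Real.sqrt x) 0).2
    rwa [Real.mul_self_sqrt hx] at this
  have hK1 : K 1 ≠ 0 := by
    intro h1
    apply hnz
    intro x
    have := E 1 x
    rw [one_mul, one_mul, h1, zero_mul] at this
    exact mul_self_eq_zero.mp this.symm
  have hK1pos : 0 < K 1 := (Knn 1 zero_le_one).lt_of_ne (Ne.symm hK1)
  by_cases hK0 : K 0 = 0
  · -- power case
    right
    have Kpos : ∀ x : ℝ, 0 < x → 0 < K x := by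
      intro x hx
      rcases (Knn x hx.le).lt_or_eq with h | h
      · exact h
      exfalso
      apply hnz
      intro u
      set s := Real.sqrt x with hs
      have hs0 : s ≠ 0 := by
        simp [hs, Real.sqrt_eq_zero', hx.le]
        intro hxx; linarith
      have := E s (u / s)
      rw [Real.mul_self_sqrt hx.le, ← h, zero_mul] at this
      have hsu : s * (u / s) = u := by field_simp
      rw [hsu] at this
      exact mul_self_eq_zero.mp this.symm
    -- Jensen identity for L
    set L : ℝ → ℝ := fun t => Real.log (K (Real.exp t)) with hL
    have J : ∀ a b : ℝ, L a + L b = 2 * L ((a + b) / 2) := by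
      intro a b
      have := E (Real.exp (a / 2)) (Real.exp (b / 2))
      rw [← Real.exp_add, ← Real.exp_add, ← Real.exp_add] at this
      have ea : a / 2 + a / 2 = a := by ring
      have eb : b / 2 + b / 2 = b := by ring
      have eab : a / 2 + b / 2 = (a + b) / 2 := by ring
      rw [ea, eb, eab] at this
      have h1 : Real.log (K (Real.exp a) * K (Real.exp b))
          = Real.log (K (Real.exp ((a+b)/2)) * K (Real.exp ((a+b)/2))) := by rw [this]
      rw [Real.log_mul (Kpos _ (Real.exp_pos _)).ne' (Kpos _ (Real.exp_pos _)).ne',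
        Real.log_mul (Kpos _ (Real.exp_pos _)).ne' (Kpos _ (Real.exp_pos _)).ne'] at h1
      simp only [hL]
      linarith
    set h : ℝ → ℝ := fun t => L t - L 0 with hh
    have hadd : ∀ a b : ℝ, h (a + b) = h a + h b := by
      intro a b
      have j1 := J a b
      have j2 := J (a + b) 0
      rw [add_zero] at j2
      simp only [hh]
      linarith
    -- measurability
    obtain ⟨ε, hε, hballU⟩ := Metric.mem_nhds_iff.1 hU
    set S : Set ℝ := Metric.ball (1:ℝ) ε with hS
    have hSU : S ⊆ U := hballU
    have hSmeas : MeasurableSet S := measurableSet_ball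
    have hrestr : Measurable (S.restrict K) := by
      have : S.restrict K = (U.restrict K) ∘ (Set.inclusion hSU) := rfl
      rw [this]
      exact hmeas.comp (measurable_subtype_coe.subtype_mk)
    classical
    set F : ℝ → ℝ := fun x => if hx : x ∈ S then K x else 0 with hF
    have hFmeas : Measurable F :=
      Measurable.dite hrestr measurable_const hSmeas
    set g : ℝ → ℝ := fun t => Real.log (F (Real.exp t)) - Real.log (K 1) with hg
    have hgmeas : Measurable g :=
      (Real.measurable_log.comp (hFmeas.comp Real.measurable_exp)).sub measurable_const
    set V : Set ℝ := Real.exp ⁻¹' S with hV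
    have hVnhds : V ∈ nhds (0:ℝ) := by
      apply Real.continuous_exp.continuousAt.preimage_mem_nhds
      rw [Real.exp_zero]
      exact Metric.ball_mem_nhds 1 hε
    have hagree : ∀ t ∈ V, h t = g t := by
      intro t ht
      have : F (Real.exp t) = K (Real.exp t) := dif_pos ht
      simp only [hh, hg, hL, this, Real.exp_zero]
    have hlin := additive_measurable_linear h hadd g hgmeas V hVnhds hagree
    obtain ⟨α, hα⟩ : ∃ α : ℝ, ∀ t, h t = α * t := ⟨h 1, hlin⟩
    refine ⟨K 1, hK1pos, α, hK0, ?_⟩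
    intro x hx
    have hxl := hα (Real.log x)
    have hhx : h (Real.log x) = Real.log (K x) - Real.log (K 1) := by
      simp only [hh, hL, Real.exp_log hx, Real.exp_zero]
    rw [hhx] at hxl
    have hKx : K x = Real.exp (Real.log (K 1) + α * Real.log x) := by
      rw [← Real.exp_log (Kpos x hx)]
      congr 1
      linarith
    rw [hKx, Real.exp_add, Real.exp_log hK1pos, Real.rpow_def_of_pos hx]
    ring_nf
  · -- constant case
    left
    refine ⟨K 0, ?_, ?_⟩
    · exact (Knn 0 le_rfl).lt_of_ne (Ne.symm hK0)
    · intro x hx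
      have := E (Real.sqrt x) 0
      simp only [Real.mul_self_sqrt hx, mul_zero] at this
      exact mul_right_cancel₀ hK0 this
end

section
/- Let I ⊆ J ⊆ ℝ be intervals containing 0 as an interior point. If K : J → ℝ is Lebesgue measurable on I and satisfies K(x+y) = K(x)K(y) whenever x, y, x+y ∈ J, then either K ≡ 0 on J, or there exists β ∈ ℝ with K(x) = exp(βx) for all x ∈ J. -/
open MeasureTheory Pointwise

set_option maxHeartbeats 2000000 in
theorem exponential_cauchy_locally_measurable
    (I J : Set ℝ) (hIJ : I ⊆ J) (hIconv : Convex ℝ I) (hJconv : Convex ℝ J)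
    (h0I : (0 : ℝ) ∈ interior I)
    (K : ℝ → ℝ)
    (hmeas : Measurable (I.restrict K))
    (heq : ∀ x ∈ J, ∀ y ∈ J, x + y ∈ J → K (x + y) = K x * K y) :
    (∀ x ∈ J, K x = 0) ∨ ∃ β : ℝ, ∀ x ∈ J, K x = Real.exp (β * x) := by
  have h0I' : (0 : ℝ) ∈ I := interior_subset h0I
  have h0J : (0 : ℝ) ∈ J := hIJ h0I'
  have hK0 : K 0 * K 0 = K 0 := by
    have := heq 0 h0J 0 h0J (by simpa using h0J)
    simpa using this.symm
  by_cases hK0z : K 0 = 0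
  · left
    intro x hx
    have := heq x hx 0 h0J (by simpa using hx)
    simp only [add_zero] at this
    rw [this, hK0z, mul_zero]
  · right
    have hK01 : K 0 = 1 := by
      have : K 0 * K 0 = K 0 * 1 := by rw [hK0, mul_one]
      exact mul_left_cancel₀ hK0z this
    -- δ-ball around 0 inside I
    obtain ⟨ε, hε, hball'⟩ := Metric.mem_nhds_iff.mp (mem_interior_iff_mem_nhds.mp h0I)
    set δ : ℝ := ε / 2 with hδdef
    have hδ : 0 < δ := by positivity
    have hball : ∀ z : ℝ, |z| ≤ δ → z ∈ I := by
      intro z hz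
      apply hball'
      rw [Metric.mem_ball, Real.dist_eq, sub_zero]
      calc |z| ≤ δ := hz
        _ < ε := by rw [hδdef]; linarith
    have hballJ : ∀ z : ℝ, |z| ≤ δ → z ∈ J := fun z hz => hIJ (hball z hz)
    -- segment membership
    have hseg : ∀ x ∈ J, ∀ t : ℝ, 0 ≤ t → t ≤ 1 → t * x ∈ J := by
      intro x hx t h0 h1
      have := hJconv h0J hx (by linarith : (0:ℝ) ≤ 1 - t) h0 (by ring)
      simpa using this
    have hhalf : ∀ x ∈ J, x / 2 ∈ J := by
      intro x hx
      have := hseg x hx (1/2) (by norm_num) (by norm_num)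
      rwa [show (1/2 : ℝ) * x = x / 2 by ring] at this
    -- K never vanishes on J
    have hKne : ∀ x ∈ J, K x ≠ 0 := by
      intro x hx hKx
      have hz : ∀ n : ℕ, K (x / 2 ^ n) = 0 ∧ x / 2 ^ n ∈ J := by
        intro n
        induction n with
        | zero => simpa using ⟨hKx, hx⟩
        | succ n ih =>
          obtain ⟨ih1, ih2⟩ := ih
          have hmem : x / 2 ^ (n + 1) ∈ J := by
            have := hhalf _ ih2
            rwa [show x / 2 ^ n / 2 = x / 2 ^ (n+1) by ring] at this
          have hsum : x / 2 ^ (n+1) + x / 2 ^ (n+1) = x / 2 ^ n := by ring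
          have := heq _ hmem _ hmem (by rw [hsum]; exact ih2)
          rw [hsum, ih1] at this
          exact ⟨mul_self_eq_zero.mp this.symm, hmem⟩
      obtain ⟨n, hn⟩ := pow_unbounded_of_one_lt (|x| / δ) (by norm_num : (1:ℝ) < 2)
      have hxn : |x / 2 ^ n| ≤ δ := by
        rw [abs_div, abs_pow, abs_two]
        rw [div_lt_iff₀ hδ] at hn
        have h2n : (0:ℝ) < 2 ^ n := by positivity
        rw [div_le_iff₀ h2n]
        nlinarith
      have hxmn : |(-(x / 2 ^ n))| ≤ δ := by rwa [abs_neg]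
      have := heq _ (hballJ _ hxn) _ (hballJ _ hxmn) (by simpa using h0J)
      rw [add_neg_cancel, hK01, (hz n).1] at this
      simp at this
    -- K positive on J
    have hKpos : ∀ x ∈ J, 0 < K x := by
      intro x hx
      have hx2 : x / 2 ∈ J := hhalf x hx
      have := heq _ hx2 _ hx2 (by rw [show x/2 + x/2 = x by ring]; exact hx)
      rw [show x/2 + x/2 = x by ring] at this
      have hnn : 0 ≤ K x := this ▸ mul_self_nonneg _
      exact lt_of_le_of_ne hnn (Ne.symm (hKne x hx))
    -- measurable extension of K
    have hImeas : MeasurableSet I := hIconv.ordConnected.measurableSet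
    set g : ℝ → ℝ := Function.extend (Subtype.val : I → ℝ) (I.restrict K) (fun _ => 0) with hgdef
    have hgmeas : Measurable g :=
      (MeasurableEmbedding.subtype_coe hImeas).measurable_extend hmeas measurable_const
    have hgI : ∀ x : ℝ, x ∈ I → g x = K x := by
      intro x hx
      have := Function.Injective.extend_apply Subtype.val_injective (I.restrict K)
        (fun _ => 0) ⟨x, hx⟩
      simpa [hgdef, Set.restrict] using this
    -- a set of positive measure where K is bounded
    set E : ℕ → Set ℝ := fun n => Set.Icc (-δ) δ ∩ g ⁻¹' Set.Icc ((n+1 : ℝ)⁻¹) (n+1) with hEdef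
    have hEmeas : ∀ n, MeasurableSet (E n) :=
      fun n => measurableSet_Icc.inter (hgmeas measurableSet_Icc)
    have hcover : Set.Icc (-δ) δ ⊆ ⋃ n : ℕ, E n := by
      intro x hx
      have hxI : x ∈ I := hball x (abs_le.mpr ⟨hx.1, hx.2⟩)
      have hKx : 0 < K x := hKpos x (hIJ hxI)
      obtain ⟨n, hn⟩ := exists_nat_ge (max (K x) (K x)⁻¹)
      refine Set.mem_iUnion.mpr ⟨n, hx, ?_⟩
      rw [Set.mem_preimage, hgI x hxI, Set.mem_Icc]
      constructor
      · rw [inv_le_comm₀ (by positivity) hKx]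
        calc (K x)⁻¹ ≤ max (K x) (K x)⁻¹ := le_max_right _ _
          _ ≤ n := hn
          _ ≤ n + 1 := by linarith
      · calc K x ≤ max (K x) (K x)⁻¹ := le_max_left _ _
          _ ≤ n := hn
          _ ≤ n + 1 := by linarith
    have hEpos : ∃ n, 0 < volume (E n) := by
      by_contra h
      push_neg at h
      simp only [nonpos_iff_eq_zero] at h
      have h1 : volume (⋃ n : ℕ, E n) = 0 := by
        rw [measure_iUnion_null_iff]; exact h
      have h2 : volume (Set.Icc (-δ) δ) = 0 :=
        measure_mono_null hcover h1
      rw [Real.volume_Icc] at h2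
      simp only [ENNReal.ofReal_eq_zero] at h2
      linarith
    obtain ⟨n, hEn⟩ := hEpos
    set M : ℝ := (n : ℝ) + 1 with hMdef
    have hM1 : 1 ≤ M := by simp [hMdef]
    have hM0 : 0 < M := by linarith
    clear_value M
    -- Steinhaus
    have hnhds : E n - E n ∈ nhds (0 : ℝ) :=
      MeasureTheory.Measure.sub_mem_nhds_zero_of_addHaar_pos volume (E n) (hEmeas n) hEn
    obtain ⟨r', hr', hr'sub⟩ := Metric.mem_nhds_iff.mp hnhds
    set r : ℝ := min (r' / 2) δ with hrdef
    have hr : 0 < r := lt_min (by linarith) hδ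
    have hrδ : r ≤ δ := min_le_right _ _
    -- bounds near 0
    have hbound : ∀ z : ℝ, |z| ≤ r → M⁻¹ * M⁻¹ ≤ K z ∧ K z ≤ M * M := by
      intro z hz
      have hzmem : z ∈ E n - E n := by
        apply hr'sub
        rw [Metric.mem_ball, Real.dist_eq, sub_zero]
        calc |z| ≤ r := hz
          _ ≤ r' / 2 := min_le_left _ _
          _ < r' := by linarith
      obtain ⟨a, ha, b, hb, hab⟩ := Set.mem_sub.mp hzmem
      obtain ⟨haIcc, haK⟩ := ha
      obtain ⟨hbIcc, hbK⟩ := hb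
      have haI : a ∈ I := hball a (abs_le.mpr ⟨haIcc.1, haIcc.2⟩)
      have hbI : b ∈ I := hball b (abs_le.mpr ⟨hbIcc.1, hbIcc.2⟩)
      rw [Set.mem_preimage, hgI a haI, Set.mem_Icc] at haK
      rw [Set.mem_preimage, hgI b hbI, Set.mem_Icc] at hbK
      have hzJ : z ∈ J := hballJ z (le_trans hz hrδ)
      have hbJ : b ∈ J := hIJ hbI
      have hKa : K a = K z * K b := by
        have : z + b = a := by linarith [hab]
        have h := heq z hzJ b hbJ (by rw [this]; exact hIJ haI)
        rwa [this] at h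
      have hKbpos : 0 < K b := hKpos b hbJ
      have hKzpos : 0 < K z := hKpos z hzJ
      have hMinv : 0 < M⁻¹ := by positivity
      rw [← hMdef] at haK hbK
      constructor
      · have h1 : M⁻¹ ≤ K z * K b := hKa ▸ haK.1
        have h2 : K b ≤ M := hbK.2
        have h3 : M⁻¹ ≤ K z * M := le_trans h1 (mul_le_mul_of_nonneg_left h2 (le_of_lt hKzpos))
        have h4 : M⁻¹ * M⁻¹ ≤ K z * M * M⁻¹ := mul_le_mul_of_nonneg_right h3 (le_of_lt hMinv)
        have h5 : K z * M * M⁻¹ = K z := by field_simp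
        linarith
      · have h1 : K z * K b ≤ M := hKa ▸ haK.2
        have h2 : M⁻¹ ≤ K b := hbK.1
        have h3 : K z * M⁻¹ ≤ M := le_trans (mul_le_mul_of_nonneg_left h2 (le_of_lt hKzpos)) h1
        have h4 : K z * M⁻¹ * M ≤ M * M := mul_le_mul_of_nonneg_right h3 (le_of_lt hM0)
        have h5 : K z * M⁻¹ * M = K z := by field_simp
        linarith
    clear hr'sub hnhds hEn hcover hEmeas hEdef hgI hgmeas hgdef hmeas
    clear E g
    clear hδdef hball' hrdef hMdef
    clear_value r δ
    -- the additive function f = log K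
    set f : ℝ → ℝ := fun x => Real.log (K x) with hfdef
    have hfadd : ∀ x ∈ J, ∀ y ∈ J, x + y ∈ J → f (x + y) = f x + f y := by
      intro x hx y hy hxy
      simp only [hfdef]
      rw [heq x hx y hy hxy, Real.log_mul (hKne x hx) (hKne y hy)]
    have hf0 : f 0 = 0 := by simp [hfdef, hK01]
    set B : ℝ := Real.log (M * M) with hBdef
    have hB0 : 0 ≤ B := Real.log_nonneg (by nlinarith)
    have hfbound : ∀ z : ℝ, |z| ≤ r → |f z| ≤ B := by
      intro z hz
      obtain ⟨h1, h2⟩ := hbound z hz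
      have hKzpos : 0 < K z := hKpos z (hballJ z (le_trans hz hrδ))
      rw [abs_le]
      constructor
      · have h3 : Real.log (M⁻¹ * M⁻¹) ≤ f z := Real.log_le_log (by positivity) h1
        have h4 : Real.log (M⁻¹ * M⁻¹) = -(Real.log (M * M)) := by
          rw [← mul_inv, Real.log_inv]
        rw [h4] at h3
        exact h3
      · exact Real.log_le_log hKzpos h2
    -- natural multiples
    have hnat : ∀ (k : ℕ) (u : ℝ), 0 ≤ u → (k : ℝ) * u ≤ δ → f ((k : ℝ) * u) = (k : ℝ) * f u := by
      intro k
      induction k with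
      | zero => intro u _ _; simpa using hf0
      | succ k ih =>
        intro u hu hku
        have hk1u : 0 ≤ (k : ℝ) * u := by positivity
        have hkk : (k : ℝ) * u ≤ ((k : ℝ) + 1) * u := by nlinarith
        have hcast : ((k + 1 : ℕ) : ℝ) = (k : ℝ) + 1 := by push_cast; ring
        rw [hcast] at hku ⊢
        have hkuδ : (k : ℝ) * u ≤ δ := le_trans hkk hku
        have huδ : u ≤ δ := by nlinarith
        have hm1 : (k : ℝ) * u ∈ J := hballJ _ (by rw [abs_of_nonneg hk1u]; exact hkuδ)
        have hm2 : u ∈ J := hballJ _ (by rw [abs_of_nonneg hu]; exact huδ)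
        have hm3 : (k : ℝ) * u + u ∈ J := by
          apply hballJ
          rw [show (k:ℝ)*u + u = ((k:ℝ)+1)*u by ring, abs_of_nonneg (by positivity)]
          exact hku
        have := hfadd _ hm1 _ hm2 hm3
        rw [show (k:ℝ)*u + u = ((k:ℝ)+1)*u by ring] at this
        rw [this, ih u hu hkuδ]
        ring
    -- oddness near 0
    have hodd : ∀ z : ℝ, |z| ≤ δ → f (-z) = -f z := by
      intro z hz
      have hmz : |(-z)| ≤ δ := by rwa [abs_neg]
      have := hfadd z (hballJ z hz) (-z) (hballJ _ hmz) (by simpa using h0J)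
      rw [add_neg_cancel, hf0] at this
      linarith
    -- smallness of f near 0
    have hsmall : ∀ η : ℝ, 0 < η → ∃ s : ℝ, 0 < s ∧ ∀ z : ℝ, |z| ≤ s → |f z| ≤ η := by
      intro η hη
      obtain ⟨N, hN⟩ := exists_nat_ge (B / η)
      refine ⟨r / 2 ^ N, by positivity, ?_⟩
      have key : ∀ z : ℝ, 0 ≤ z → z ≤ r / 2 ^ N → |f z| ≤ η := by
        intro z hz0 hz
        have h2N : (0:ℝ) < 2 ^ N := by positivity
        have hz' : z * 2 ^ N ≤ r := (le_div_iff₀ h2N).mp hz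
        have hmul : ((2 ^ N : ℕ) : ℝ) * z ≤ r := by push_cast; nlinarith
        have hfz := hnat (2 ^ N) z hz0 (le_trans hmul hrδ)
        have hbnd := hfbound (((2 ^ N : ℕ) : ℝ) * z)
          (by rw [abs_of_nonneg (by positivity)]; exact hmul)
        rw [hfz] at hbnd
        push_cast at hbnd
        rw [abs_mul, abs_of_nonneg (le_of_lt h2N)] at hbnd
        have hN2 : (N : ℝ) ≤ 2 ^ N := by
          exact_mod_cast le_of_lt (Nat.lt_two_pow_self (n := N))
        have hBN : B ≤ η * 2 ^ N := by
          rw [div_le_iff₀ hη] at hN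
          calc B ≤ η * N := by linarith
            _ ≤ η * 2 ^ N := by nlinarith
        nlinarith [abs_nonneg (f z)]
      intro z hz
      rcases le_or_gt 0 z with h | h
      · exact key z h (le_trans (le_abs_self z) hz)
      · have h1 : |(-z)| ≤ r / 2 ^ N := by rwa [abs_neg]
        have h2 := key (-z) (by linarith) (le_trans (le_abs_self (-z)) h1)
        have h3 : f z = -f (-z) := by
          have := hodd (-z) (le_trans h1 (by
            have : r / 2 ^ N ≤ r := by
              apply div_le_self (le_of_lt hr)
              exact one_le_pow₀ (by norm_num)
            linarith))
          rw [neg_neg] at this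
          linarith
        rw [h3, abs_neg]
        exact h2
    set β : ℝ := f r / r with hβdef
    have hfK : ∀ x : ℝ, f x = Real.log (K x) := fun _ => rfl
    clear_value f β
    have hrJ : r ∈ J := hballJ r (by rw [abs_of_pos hr]; exact hrδ)
    -- linearity on [0, r]
    have hlin : ∀ x : ℝ, 0 ≤ x → x ≤ r → f x = β * x := by
      intro x hx0 hxr
      have hdist : ∀ η : ℝ, 0 < η → |f x - β * x| ≤ η := by
        intro η hη
        obtain ⟨s, hs, hsb⟩ := hsmall (η / 2) (by linarith)
        obtain ⟨nn, hnn1, hn1, hn2⟩ :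
            ∃ nn : ℕ, (1:ℝ) ≤ nn ∧ r / s ≤ nn ∧ 2 * |f r| / η ≤ nn := by
          obtain ⟨n₀, hn₀⟩ := exists_nat_ge (max (r / s) (2 * |f r| / η))
          refine ⟨n₀ + 1, by exact_mod_cast Nat.succ_le_succ (Nat.zero_le n₀), ?_, ?_⟩
          · push_cast
            linarith [(le_max_left (r / s) (2 * |f r| / η)).trans hn₀]
          · push_cast
            linarith [(le_max_right (r / s) (2 * |f r| / η)).trans hn₀]
        have hnn0 : (0:ℝ) < nn := by linarith
        set m : ℕ := ⌊x * nn / r⌋₊ with hmdef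
        have hfrac0 : 0 ≤ x * nn / r := by positivity
        have hm_le : (m : ℝ) * r ≤ x * nn := (le_div_iff₀ hr).mp (Nat.floor_le hfrac0)
        have hm_gt : x * nn < ((m : ℝ) + 1) * r := (div_lt_iff₀ hr).mp (Nat.lt_floor_add_one _)
        clear_value m
        clear hmdef
        set y : ℝ := x - (m : ℝ) * r / nn with hydef
        clear_value y
        have hy0 : 0 ≤ y := by
          have h1 : (m : ℝ) * r / nn ≤ x := by rw [div_le_iff₀ hnn0]; exact hm_le
          rw [hydef]; linarith
        have hy_small : y ≤ r / nn := by
          have h1 : x ≤ ((m : ℝ) + 1) * r / nn := by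
            rw [le_div_iff₀ hnn0]; nlinarith
          have h2 : ((m : ℝ) + 1) * r / nn = r / nn + (m : ℝ) * r / nn := by ring
          rw [hydef]; linarith [h1, h2]
        have hrnn_pos : 0 < r / (nn : ℝ) := by positivity
        have hrnn_le : r / (nn : ℝ) ≤ r := by
          rw [div_le_iff₀ hnn0]
          nlinarith
        have hmn : (m : ℝ) ≤ nn := by
          have h1 : x * nn ≤ r * nn := mul_le_mul_of_nonneg_right hxr (le_of_lt hnn0)
          refine le_of_mul_le_mul_right ?_ hr
          have h2 := mul_comm r (nn : ℝ)
          linarith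
        have hy_r : y ≤ r := le_trans hy_small hrnn_le
        have hrn0 : 0 ≤ r / (nn : ℝ) := le_of_lt hrnn_pos
        have hrnδ : (nn : ℝ) * (r / nn) ≤ δ := by
          rw [mul_div_cancel₀ _ (ne_of_gt hnn0)]; exact hrδ
        have hfr : f r = (nn : ℝ) * f (r / nn) := by
          have := hnat nn (r / nn) hrn0 hrnδ
          rwa [mul_div_cancel₀ _ (ne_of_gt hnn0)] at this
        have hmr_le : (m : ℝ) * (r / nn) ≤ r := by
          have h1 : (m : ℝ) * (r / nn) ≤ (nn : ℝ) * (r / nn) :=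
            mul_le_mul_of_nonneg_right hmn hrn0
          rwa [mul_div_cancel₀ _ (ne_of_gt hnn0)] at h1
        have hfm : f ((m : ℝ) * (r / nn)) = (m : ℝ) * f (r / nn) :=
          hnat m (r / nn) hrn0 (le_trans hmr_le hrδ)
        have hmem1 : y ∈ J := hballJ y (by rw [abs_of_nonneg hy0]; linarith)
        have hmem2 : (m : ℝ) * (r / nn) ∈ J := by
          apply hballJ
          rw [abs_of_nonneg (by positivity)]
          linarith
        have hsum : y + (m : ℝ) * (r / nn) = x := by rw [hydef]; ring
        have hmemx : x ∈ J := hballJ x (by rw [abs_of_nonneg hx0]; linarith)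
        have hfx : f x = f y + f ((m : ℝ) * (r / nn)) := by
          have := hfadd y hmem1 _ hmem2 (by rw [hsum]; exact hmemx)
          rwa [hsum] at this
        have hfy : |f y| ≤ η / 2 := by
          apply hsb
          rw [abs_of_nonneg hy0]
          have h1 : r / (nn : ℝ) ≤ s := by
            rw [div_le_iff₀ hnn0]
            rw [div_le_iff₀ hs] at hn1
            linarith [mul_comm s (nn : ℝ)]
          linarith
        have hfreb : |(m : ℝ) * f (r / nn) - β * x| ≤ η / 2 := by
          have hfrn : f (r / nn) = f r / nn := by
            rw [hfr, mul_div_cancel_left₀ _ (ne_of_gt hnn0)]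
          rw [hfrn, hβdef]
          have hexp : (m : ℝ) * (f r / nn) - f r / r * x = f r * ((m : ℝ) / nn - x / r) := by
            field_simp
          rw [hexp, abs_mul]
          have hmx : (m : ℝ) / nn ≤ x / r := by
            rw [div_le_div_iff₀ hnn0 hr]; nlinarith
          have hxm : x / r - (m : ℝ) / nn ≤ 1 / nn := by
            rw [div_sub_div _ _ (ne_of_gt hr) (ne_of_gt hnn0),
              div_le_div_iff₀ (mul_pos hr hnn0) hnn0]
            nlinarith
          have h1nn : (0:ℝ) ≤ 1 / nn := by positivity
          have habs : |(m : ℝ) / nn - x / r| ≤ 1 / nn := by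
            rw [abs_le]
            constructor <;> linarith
          have hfr2 : 2 * |f r| ≤ η * nn := by
            rw [div_le_iff₀ hη] at hn2
            nlinarith
          calc |f r| * |(m : ℝ) / nn - x / r| ≤ |f r| * (1 / nn) :=
                mul_le_mul_of_nonneg_left habs (abs_nonneg _)
            _ ≤ η / 2 := by
                rw [mul_one_div, div_le_iff₀ hnn0]
                nlinarith
        calc |f x - β * x| = |f y + ((m : ℝ) * f (r / nn) - β * x)| := by
              rw [hfx, hfm]; ring_nf
          _ ≤ |f y| + |(m : ℝ) * f (r / nn) - β * x| := abs_add_le _ _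
          _ ≤ η / 2 + η / 2 := add_le_add hfy hfreb
          _ = η := by ring
      have : dist (f x) (β * x) = |f x - β * x| := Real.dist_eq _ _
      apply eq_of_forall_dist_le
      intro η hη
      rw [this]
      exact hdist η hη
    -- K = exp(β x) on [-r, r]
    have hlin' : ∀ x : ℝ, |x| ≤ r → K x = Real.exp (β * x) := by
      intro x hx
      have hxJ : x ∈ J := hballJ x (le_trans hx hrδ)
      have hKx : 0 < K x := hKpos x hxJ
      rcases le_or_gt 0 x with h | h
      · rw [← Real.exp_log hKx]
        congr 1
        rw [← hfK x]
        exact hlin x h (le_trans (le_abs_self x) hx)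
      · have hmx : |(-x)| ≤ r := by rwa [abs_neg]
        have h1 : f (-x) = β * (-x) := hlin (-x) (by linarith) (le_trans (le_abs_self (-x)) hmx)
        have h2 : f x = -f (-x) := by
          have := hodd (-x) (le_trans hmx hrδ)
          rw [neg_neg] at this
          linarith
        rw [← Real.exp_log hKx]
        congr 1
        rw [← hfK x, h2, h1]
        ring
    -- extension to all of J by doubling
    have hext : ∀ N : ℕ, ∀ x ∈ J, |x| ≤ 2 ^ N * r → K x = Real.exp (β * x) := by
      intro N
      induction N with
      | zero => intro x _ hx; exact hlin' x (by simpa using hx)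
      | succ N ih =>
        intro x hx hxb
        have hx2J : x / 2 ∈ J := hhalf x hx
        have hx2b : |x / 2| ≤ 2 ^ N * r := by
          rw [abs_div, abs_two, div_le_iff₀ (by norm_num : (0:ℝ) < 2)]
          calc |x| ≤ 2 ^ (N+1) * r := hxb
            _ = 2 ^ N * r * 2 := by ring
        have hKx2 := ih (x / 2) hx2J hx2b
        have := heq (x/2) hx2J (x/2) hx2J (by rw [show x/2 + x/2 = x by ring]; exact hx)
        rw [show x/2 + x/2 = x by ring] at this
        rw [this, hKx2, ← Real.exp_add]
        congr 1
        ring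
    refine ⟨β, fun x hx => ?_⟩
    obtain ⟨N, hN⟩ := exists_nat_ge (|x| / r)
    apply hext N x hx
    have hN2 : (N : ℝ) ≤ 2 ^ N := by exact_mod_cast le_of_lt (Nat.lt_two_pow_self (n := N))
    rw [div_le_iff₀ hr] at hN
    nlinarith
end

section
/- Let I ⊆ J ⊆ (0,∞) be intervals containing 1 as an interior point. If K : J → ℝ is Lebesgue measurable on I and satisfies K(xy) = K(x) + K(y) whenever x, y, xy ∈ J, then there exists β ∈ ℝ such that K(x) = β·ln(x) for all x ∈ J. -/
open MeasureTheory Set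

/-- A measurable function is bounded on a subset of `[0, δ]` of measure `> 3δ/4`. -/
lemma aux_exists_bound_set (F : ℝ → ℝ) (hF : Measurable F) {δ : ℝ} (hδ : 0 < δ) :
    ∃ M : ℝ, 0 < M ∧
      ENNReal.ofReal (3 * δ / 4) < volume {x | x ∈ Icc 0 δ ∧ |F x| ≤ M} := by
  set s : ℕ → Set ℝ := fun n => {x | x ∈ Icc 0 δ ∧ |F x| ≤ (n : ℝ) + 1} with hs
  have hmono : Monotone s := by
    intro m n hmn x hx
    refine ⟨hx.1, hx.2.trans ?_⟩
    have : (m : ℝ) ≤ n := Nat.cast_le.2 hmn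
    linarith
  have hunion : ⋃ n, s n = Icc 0 δ := by
    ext x
    simp only [mem_iUnion, hs, mem_setOf_eq, mem_Icc]
    constructor
    · rintro ⟨n, h, _⟩; exact h
    · intro h
      obtain ⟨n, hn⟩ := exists_nat_ge (|F x|)
      exact ⟨n, h, hn.trans (by linarith)⟩
  have htends : Filter.Tendsto (fun n => volume (s n)) Filter.atTop
      (nhds (volume (Icc (0:ℝ) δ))) := by
    rw [← hunion]
    exact tendsto_measure_iUnion_atTop hmono
  have hlt : ENNReal.ofReal (3 * δ / 4) < volume (Icc (0:ℝ) δ) := by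
    rw [Real.volume_Icc]
    exact (ENNReal.ofReal_lt_ofReal_iff (by linarith)).2 (by linarith)
  have := htends.eventually (eventually_gt_nhds hlt)
  obtain ⟨n, hn⟩ := this.exists
  exact ⟨(n : ℝ) + 1, by positivity, hn⟩

/-- Local measurable Cauchy functional equation: a measurable function additive on
`[-δ, δ]` is linear there. -/
lemma aux_local_cauchy (F : ℝ → ℝ) (hF : Measurable F) {δ : ℝ} (hδ : 0 < δ)
    (hadd : ∀ s t : ℝ, |s| ≤ δ → |t| ≤ δ → |s + t| ≤ δ → F (s + t) = F s + F t) :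
    ∃ β : ℝ, ∀ t : ℝ, |t| ≤ δ → F t = β * t := by
  have hF0 : F 0 = 0 := by
    have := hadd 0 0 (by simp [le_of_lt hδ]) (by simp [le_of_lt hδ]) (by simp [le_of_lt hδ])
    simp at this; linarith
  have hodd : ∀ t : ℝ, |t| ≤ δ → F (-t) = -F t := by
    intro t ht
    have h1 : |(-t : ℝ)| ≤ δ := by rwa [abs_neg]
    have := hadd t (-t) ht h1 (by simp [le_of_lt hδ])
    simp [hF0] at this; linarith
  obtain ⟨M, hM, hvol⟩ := aux_exists_bound_set F hF hδ
  set A : Set ℝ := {x | x ∈ Icc 0 δ ∧ |F x| ≤ M} with hA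
  have hAmeas : MeasurableSet A := by
    have : A = Icc 0 δ ∩ F ⁻¹' (Icc (-M) M) := by
      ext x; simp [hA, abs_le, and_assoc]
    rw [this]
    exact measurableSet_Icc.inter (hF measurableSet_Icc)
  -- bound on [δ/2, δ]
  have hbd1 : ∀ t ∈ Icc (δ/2) δ, |F t| ≤ 2 * M := by
    intro t ht
    obtain ⟨ht1, ht2⟩ := ht
    set B : Set ℝ := (fun x => t - x) ⁻¹' A with hB
    have hBmeas : MeasurableSet B := (measurable_const.sub measurable_id) hAmeas
    have hBvol : volume B = volume A := by
      have : B = (fun x : ℝ => -x) ⁻¹' ((fun x : ℝ => t + x) ⁻¹' A) := by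
        ext x; simp [hB, sub_eq_add_neg]
      rw [this]
      have h1 : volume ((fun x : ℝ => t + x) ⁻¹' A) = volume A :=
        measure_preimage_add volume t A
      have h2 : ((fun x : ℝ => -x) ⁻¹' ((fun x : ℝ => t + x) ⁻¹' A)) =
          -((fun x : ℝ => t + x) ⁻¹' A) := rfl
      rw [h2, Measure.measure_neg, h1]
    -- A and B lie in Icc (t - δ) δ
    have hsub : A ∪ B ⊆ Icc (t - δ) δ := by
      intro x hx
      rcases hx with hx | hx
      · exact ⟨by linarith [hx.1.1], hx.1.2⟩
      · have h1 := hx.1.1; have h2 := hx.1.2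
        simp only [mem_Icc] at h1 h2 ⊢
        constructor <;> [linarith [hx.1.2]; linarith [hx.1.1]]
    have hne : (A ∩ B).Nonempty := by
      by_contra hcon
      rw [not_nonempty_iff_eq_empty] at hcon
      have hdisj : Disjoint A B := disjoint_iff_inter_eq_empty.2 hcon
      have hu : volume (A ∪ B) = volume A + volume B := measure_union hdisj hBmeas
      have hle : volume (A ∪ B) ≤ ENNReal.ofReal (2 * δ - t) := by
        calc volume (A ∪ B) ≤ volume (Icc (t - δ) δ) := measure_mono hsub
        _ = ENNReal.ofReal (2 * δ - t) := by rw [Real.volume_Icc]; ring_nf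
      have hgt : ENNReal.ofReal (2 * δ - t) < volume A + volume B := by
        calc ENNReal.ofReal (2 * δ - t)
            ≤ ENNReal.ofReal (3 * δ / 4) + ENNReal.ofReal (3 * δ / 4) := by
              rw [← ENNReal.ofReal_add (by linarith) (by linarith)]
              exact ENNReal.ofReal_le_ofReal (by linarith)
          _ < volume A + volume B := by
              rw [hBvol]; exact ENNReal.add_lt_add hvol hvol
      rw [hu] at hle
      exact absurd hle (not_le.2 hgt)
    obtain ⟨x, hxA, hxB⟩ := hne
    have hx1 := hxA.1; have hx2 := hxA.2
    have hy1 := hxB.1; have hy2 := hxB.2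
    simp only [mem_Icc] at hx1 hy1
    have habs : ∀ z : ℝ, z ∈ Icc 0 δ → |z| ≤ δ := fun z hz =>
      abs_le.2 ⟨by linarith [hz.1], hz.2⟩
    have heq : F t = F x + F (t - x) := by
      have := hadd x (t - x) (habs x hx1) (habs _ hy1)
        (by rw [add_sub_cancel]; exact abs_le.2 ⟨by linarith, ht2⟩)
      rwa [add_sub_cancel] at this
    rw [heq]
    calc |F x + F (t - x)| ≤ |F x| + |F (t - x)| := abs_add_le _ _
      _ ≤ 2 * M := by linarith
  -- bound on [0, δ]
  have hbd2 : ∀ t ∈ Icc (0:ℝ) δ, |F t| ≤ 4 * M := by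
    intro t ht
    obtain ⟨ht1, ht2⟩ := ht
    by_cases hc : δ/2 ≤ t
    · linarith [hbd1 t ⟨hc, ht2⟩]
    · push_neg at hc
      have h1 : F (t + δ/2) = F t + F (δ/2) := hadd t (δ/2)
        (abs_le.2 ⟨by linarith, by linarith⟩) (abs_le.2 ⟨by linarith, by linarith⟩)
        (abs_le.2 ⟨by linarith, by linarith⟩)
      have h2 := hbd1 (t + δ/2) ⟨by linarith, by linarith⟩
      have h3 := hbd1 (δ/2) ⟨le_refl _, by linarith⟩
      have := abs_sub_abs_le_abs_sub (F t) 0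
      have h4 : F t = F (t + δ/2) - F (δ/2) := by linarith
      rw [h4]
      calc |F (t + δ/2) - F (δ/2)| ≤ |F (t + δ/2)| + |F (δ/2)| := abs_sub _ _
        _ ≤ 4 * M := by linarith
  -- bound on [-δ, δ]
  have hbd : ∀ t : ℝ, |t| ≤ δ → |F t| ≤ 4 * M := by
    intro t ht
    rcases le_or_gt 0 t with h | h
    · exact hbd2 t ⟨h, (abs_le.1 ht).2⟩
    · have h1 : |(-t : ℝ)| ≤ δ := by rwa [abs_neg]
      have h2 : F t = - F (-t) := by
        have := hodd (-t) h1; rw [neg_neg] at this; linarith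
      rw [h2, abs_neg]
      exact hbd2 (-t) ⟨by linarith, by linarith [(abs_le.1 ht).1]⟩
  -- set β, g
  set β : ℝ := F δ / δ with hβ
  refine ⟨β, ?_⟩
  set g : ℝ → ℝ := fun x => F x - β * x with hg
  have hgadd : ∀ s t : ℝ, |s| ≤ δ → |t| ≤ δ → |s + t| ≤ δ → g (s + t) = g s + g t := by
    intro s t hs ht hst
    simp only [hg]
    rw [hadd s t hs ht hst]; ring
  have hgδ : g δ = 0 := by
    simp only [hg, hβ]
    field_simp
    ring
  have hgbd : ∀ t : ℝ, |t| ≤ δ → |g t| ≤ 4 * M + |β| * δ := by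
    intro t ht
    simp only [hg]
    calc |F t - β * t| ≤ |F t| + |β * t| := abs_sub _ _
      _ ≤ 4 * M + |β| * δ := by
          have h1 := hbd t ht
          have h2 : |β * t| ≤ |β| * δ := by
            rw [abs_mul]
            exact mul_le_mul_of_nonneg_left ht (abs_nonneg _)
          linarith
  -- g (t - δ) = g t for t ∈ [0, δ]
  have hshift : ∀ t ∈ Icc (0:ℝ) δ, g (t - δ) = g t := by
    intro t ht
    have h1 : |(t - δ : ℝ)| ≤ δ := abs_le.2 ⟨by linarith [ht.1], by linarith [ht.2]⟩
    have h2 : |(δ : ℝ)| ≤ δ := by rw [abs_of_pos hδ]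
    have h3 : |(t - δ) + δ| ≤ δ := by
      rw [sub_add_cancel]; exact abs_le.2 ⟨by linarith [ht.1], ht.2⟩
    have := hgadd (t - δ) δ h1 h2 h3
    rw [sub_add_cancel, hgδ] at this
    linarith
  -- key iteration
  have hkey : ∀ t ∈ Icc (0:ℝ) δ, ∀ n : ℕ, ∃ s ∈ Ico (0:ℝ) δ, g s = n * g t := by
    intro t ht n
    induction n with
    | zero =>
        refine ⟨0, ⟨le_refl _, hδ⟩, ?_⟩
        have : g 0 = 0 := by
          simp only [hg]
          have : F 0 = 0 := hF0
          simp [this]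
        simp [this]
    | succ n ih =>
        obtain ⟨s, hs, hgs⟩ := ih
        obtain ⟨hs0, hsδ⟩ := hs
        by_cases hc : s + t < δ
        · refine ⟨s + t, ⟨by linarith [ht.1], hc⟩, ?_⟩
          have := hgadd s t (abs_le.2 ⟨by linarith, by linarith⟩)
            (abs_le.2 ⟨by linarith [ht.1], ht.2⟩)
            (abs_le.2 ⟨by linarith [ht.1], by linarith⟩)
          rw [this, hgs]; push_cast; ring
        · push_neg at hc
          refine ⟨s + t - δ, ⟨by linarith, by linarith [ht.2]⟩, ?_⟩
          have h1 : s + t - δ = s + (t - δ) := by ring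
          have h2 := hgadd s (t - δ)
            (abs_le.2 ⟨by linarith, by linarith⟩)
            (abs_le.2 ⟨by linarith [ht.1], by linarith [ht.2]⟩)
            (abs_le.2 ⟨by linarith, by linarith [ht.2]⟩)
          rw [h1, h2, hshift t ht, hgs]; push_cast; ring
  -- conclude g = 0 on [0, δ]
  have hgzero : ∀ t ∈ Icc (0:ℝ) δ, g t = 0 := by
    intro t ht
    by_contra hne
    have habs : 0 < |g t| := abs_pos.2 hne
    obtain ⟨n, hn⟩ := exists_nat_gt ((4 * M + |β| * δ) / |g t|)
    obtain ⟨s, hs, hgs⟩ := hkey t ht n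
    have h1 : |g s| ≤ 4 * M + |β| * δ := hgbd s (abs_le.2 ⟨by linarith [hs.1], le_of_lt hs.2⟩)
    rw [hgs, abs_mul, Nat.abs_cast] at h1
    have h2 : (4 * M + |β| * δ) / |g t| < n := hn
    have h3 : 4 * M + |β| * δ < n * |g t| := by
      rwa [div_lt_iff₀ habs] at h2
    linarith
  -- finish
  intro t ht
  rcases le_or_gt 0 t with h | h
  · have := hgzero t ⟨h, (abs_le.1 ht).2⟩
    simp only [hg] at this; linarith
  · have h1 : |(-t : ℝ)| ≤ δ := by rwa [abs_neg]
    have h2 := hgzero (-t) ⟨by linarith, by linarith [(abs_le.1 ht).1]⟩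
    simp only [hg] at h2
    have h3 := hodd (-t) h1
    rw [neg_neg] at h3
    have : F (-t) = β * (-t) := by linarith
    rw [this] at h3
    linarith

theorem logarithmic_cauchy_locally_measurable
    (I J : Set ℝ) (hIJ : I ⊆ J) (hJpos : J ⊆ Set.Ioi (0 : ℝ))
    (hIconv : Convex ℝ I) (hJconv : Convex ℝ J)
    (h1I : (1 : ℝ) ∈ interior I)
    (K : ℝ → ℝ)
    (hmeas : Measurable (I.restrict K))
    (heq : ∀ x ∈ J, ∀ y ∈ J, x * y ∈ J → K (x * y) = K x + K y) :
    ∃ β : ℝ, ∀ x ∈ J, K x = β * Real.log x := by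
  have hImeas : MeasurableSet I := hIconv.ordConnected.measurableSet
  -- measurable extension of K
  set K' : ℝ → ℝ := Function.extend (Subtype.val : I → ℝ) (I.restrict K) (fun _ => 0) with hK'
  have hK'meas : Measurable K' :=
    (MeasurableEmbedding.subtype_coe hImeas).measurable_extend hmeas measurable_const
  have hK'eq : ∀ x ∈ I, K' x = K x := by
    intro x hx
    have : K' x = Function.extend (Subtype.val : I → ℝ) (I.restrict K) (fun _ => 0)
      ((⟨x, hx⟩ : I) : ℝ) := rfl
    rw [this, Subtype.val_injective.extend_apply]
    rfl
  set F : ℝ → ℝ := fun t => K' (Real.exp t) with hFdef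
  have hFmeas : Measurable F := hK'meas.comp Real.measurable_exp
  -- find δ
  have hopen : IsOpen (Real.exp ⁻¹' interior I) := isOpen_interior.preimage Real.continuous_exp
  have h0mem : (0 : ℝ) ∈ Real.exp ⁻¹' interior I := by
    simp [Real.exp_zero, h1I]
  obtain ⟨ε, hε, hball⟩ := Metric.isOpen_iff.1 hopen 0 h0mem
  set δ : ℝ := ε / 2 with hδdef
  have hδ : 0 < δ := by positivity
  have hδI : ∀ t : ℝ, |t| ≤ δ → Real.exp t ∈ I := by
    intro t ht
    apply interior_subset
    apply hball
    rw [Metric.mem_ball, Real.dist_eq, sub_zero]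
    linarith
  have h1J : (1 : ℝ) ∈ J := hIJ (interior_subset h1I)
  -- additivity of F on [-δ, δ]
  have hFadd : ∀ s t : ℝ, |s| ≤ δ → |t| ≤ δ → |s + t| ≤ δ → F (s + t) = F s + F t := by
    intro s t hs ht hst
    have h1 : Real.exp s ∈ I := hδI s hs
    have h2 : Real.exp t ∈ I := hδI t ht
    have h3 : Real.exp (s + t) ∈ I := hδI _ hst
    simp only [hFdef]
    rw [hK'eq _ h3, hK'eq _ h1, hK'eq _ h2, Real.exp_add]
    exact heq _ (hIJ h1) _ (hIJ h2) (by rw [← Real.exp_add]; exact hIJ h3)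
  obtain ⟨β, hβ⟩ := aux_local_cauchy F hFmeas hδ hFadd
  refine ⟨β, ?_⟩
  intro x hx
  have hx0 : 0 < x := hJpos hx
  set t : ℝ := Real.log x with htdef
  have hexpt : Real.exp t = x := Real.exp_log hx0
  obtain ⟨n, hn⟩ := exists_nat_ge (|t| / δ)
  set m : ℕ := n + 1 with hm
  have hm0 : (0 : ℝ) < m := by positivity
  set u : ℝ := t / m with hu
  have hut : (m : ℝ) * u = t := by
    rw [hu]; field_simp
  have huδ : |u| ≤ δ := by
    rw [hu, abs_div, abs_of_pos hm0, div_le_iff₀ hm0]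
    have h1 : |t| ≤ n * δ := by
      rw [div_le_iff₀ hδ] at hn; linarith
    have : (n : ℝ) ≤ m := by rw [hm]; push_cast; linarith
    nlinarith
  -- exp (k * u) ∈ J for k ≤ m
  have hmemJ : ∀ k : ℕ, k ≤ m → Real.exp (k * u) ∈ J := by
    intro k hk
    have hkm : (k : ℝ) / m ≤ 1 := by
      rw [div_le_one hm0]; exact_mod_cast hk
    have hkm0 : (0 : ℝ) ≤ (k : ℝ) / m := by positivity
    have hku : (k : ℝ) * u = ((k : ℝ) / m) * t := by
      rw [hu]; field_simp
    have hJord : J.OrdConnected := hJconv.ordConnected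
    rcases le_or_gt 0 t with hts | hts
    · have h1 : 0 ≤ (k : ℝ) * u := by rw [hku]; positivity
      have h2 : (k : ℝ) * u ≤ t := by
        rw [hku]; nlinarith
      have := hJord.out h1J hx
      apply this
      rw [← hexpt]
      exact ⟨Real.one_le_exp h1, Real.exp_le_exp.2 h2⟩
    · have h1 : t ≤ (k : ℝ) * u := by rw [hku]; nlinarith
      have h2 : (k : ℝ) * u ≤ 0 := by rw [hku]; nlinarith
      have := hJord.out hx h1J
      apply this
      rw [← hexpt]
      refine ⟨Real.exp_le_exp.2 h1, ?_⟩
      calc Real.exp ((k:ℝ) * u) ≤ Real.exp 0 := Real.exp_le_exp.2 h2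
        _ = 1 := Real.exp_zero
  -- K (exp (k * u)) = k * K (exp u)
  have hiter : ∀ k : ℕ, k ≤ m → K (Real.exp (k * u)) = k * K (Real.exp u) := by
    intro k hk
    induction k with
    | zero =>
        simp only [Nat.cast_zero, zero_mul, Real.exp_zero]
        have h1 : K (1 * 1) = K 1 + K 1 := heq 1 h1J 1 h1J (by simpa using h1J)
        rw [one_mul] at h1
        linarith
    | succ k ih =>
        have hk' : k ≤ m := Nat.le_of_succ_le hk
        have h1 : Real.exp (k * u) ∈ J := hmemJ k hk'
        have h2 : Real.exp u ∈ J := hIJ (hδI u huδ)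
        have h3 : Real.exp ((k + 1 : ℕ) * u) ∈ J := hmemJ (k + 1) hk
        have h4 : Real.exp ((k + 1 : ℕ) * u) = Real.exp (k * u) * Real.exp u := by
          rw [← Real.exp_add]; push_cast; ring_nf
        rw [h4]
        rw [heq _ h1 _ h2 (h4 ▸ h3), ih hk']
        push_cast; ring
  have hKx : K x = m * K (Real.exp u) := by
    have := hiter m (le_refl m)
    rwa [hut, hexpt] at this
  have hFu : K (Real.exp u) = β * u := by
    have h1 := hβ u huδ
    simp only [hFdef] at h1
    rwa [hK'eq _ (hδI u huδ)] at h1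
  rw [hKx, hFu, ← hut]; ring
end
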